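/- arXiv:0911.3468 — 3 statements merged into one kernel-verified Lean document; each statement's English description precedes it below -/
import Mathlib

section
/- Let L be a finite-dimensional simple Lie superalgebra over 𝔽, M = L* its dual module, ψ : L → L* a superderivation with canonical extension Ψ : U(L)⁺ → L*, and let x ∈ L_{0̄} be an even element such that x^{p^t} (the p^t-th power in U(L)) is central in U(L)⁺. Then x^{p^t − 1} · ψ(x) = 0. -/
/-- The sign `(-1)^a` for a parity `a : ZMod 2`. -/
def sgn (F : Type*) [Ring F] (a : ZMod 2) : F := if a = 0 then 1 else -1

lemma aux_sub_pow {R : Type*} [Ring R] {p : ℕ} (hp : p.Prime) (hpR : (p : R) = 0) (t : ℕ)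
    {a b : R} (h : Commute a b) :
    (a - b) ^ p ^ t = a ^ p ^ t - b ^ p ^ t := by
  have hq0 : 0 < p ^ t := pow_pos hp.pos t
  have hneg : Commute a (-b) := h.neg_right
  have hsubset : ({0, p ^ t} : Finset ℕ) ⊆ Finset.range (p ^ t + 1) := by
    intro k hk
    simp only [Finset.mem_insert, Finset.mem_singleton] at hk
    rcases hk with h' | h' <;> simp [h', Finset.mem_range]
  have hzero : ∀ k ∈ Finset.range (p ^ t + 1), k ∉ ({0, p ^ t} : Finset ℕ) →
      a ^ k * (-b) ^ (p ^ t - k) * ((p ^ t).choose k : R) = 0 := by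
    intro k _ hk'
    simp only [Finset.mem_insert, Finset.mem_singleton, not_or] at hk'
    obtain ⟨m, hm⟩ := hp.dvd_choose_pow hk'.1 hk'.2
    rw [hm, Nat.cast_mul, hpR, zero_mul, mul_zero]
  have hnegpow : (-b) ^ p ^ t = -(b ^ p ^ t) := by
    rcases hp.eq_two_or_odd' with h2 | hodd
    · subst h2
      have h2R : (2 : R) = 0 := by exact_mod_cast hpR
      have h1 : (-1 : R) = 1 := (eq_neg_of_add_eq_zero_left (by rw [one_add_one_eq_two, h2R])).symm
      rw [neg_pow, h1, one_pow, one_mul]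
      exact eq_neg_of_add_eq_zero_left (by rw [← two_mul, h2R, zero_mul])
    · exact (hodd.pow).neg_pow b
  rw [sub_eq_add_neg, hneg.add_pow, ← Finset.sum_subset hsubset hzero,
    Finset.sum_pair hq0.ne]
  simp only [pow_zero, one_mul, Nat.sub_zero, Nat.choose_zero_right, Nat.cast_one, mul_one,
    Nat.sub_self, Nat.choose_self]
  rw [hnegpow]
  abel

attribute [-instance] LinearMap.addMonoid in
set_option maxHeartbeats 1600000 in
/-- Let `L` be a finite-dimensional simple Lie superalgebra, `U = U(L)` its
universal enveloping algebra, `L*` the dual module (a `U`-module via `σ`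
restricting to the coadjoint action), `ψ : L → L*` a homogeneous superderivation
and `x ∈ L₀` an even element such that `x^{p^t}` is central in `U(L)`.  Then
`x^{p^t - 1} · ψ(x) = 0`. -/
theorem stmt7 (p t : ℕ) (hp : p.Prime)
    (F : Type*) [Field F] [CharP F p]
    (L : Type*) [AddCommGroup L] [Module F L] [Module.Finite F L]
    (U : Type*) [Ring U] [Algebra F U]
    (g : ZMod 2 → Submodule F L) (br : L →ₗ[F] L →ₗ[F] L)
    (hg : DirectSum.IsInternal g)
    (hbrg : ∀ a b : ZMod 2, ∀ x ∈ g a, ∀ y ∈ g b, br x y ∈ g (a + b))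
    (hskew : ∀ a b : ZMod 2, ∀ x ∈ g a, ∀ y ∈ g b,
      br x y = - sgn F (a * b) • br y x)
    (hjac : ∀ a b : ZMod 2, ∀ x ∈ g a, ∀ y ∈ g b, ∀ z : L,
      br x (br y z) = br (br x y) z + sgn F (a * b) • br y (br x z))
    (hsimple : ∀ I : Submodule F L, (∀ x y : L, y ∈ I → br x y ∈ I) → I = ⊥ ∨ I = ⊤)
    (hnonab : br ≠ 0)
    -- `(U, ι)` is the universal enveloping algebra of `L`:
    (ι : L →ₗ[F] U)
    (hι : ∀ a b : ZMod 2, ∀ x ∈ g a, ∀ y ∈ g b,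
      ι (br x y) = ι x * ι y - sgn F (a * b) • (ι y * ι x))
    (huniv : ∀ (A : Type*) [Ring A] [Algebra F A] (jmap : L →ₗ[F] A),
      (∀ a b : ZMod 2, ∀ x ∈ g a, ∀ y ∈ g b,
        jmap (br x y) = jmap x * jmap y - sgn F (a * b) • (jmap y * jmap x)) →
      ∃! φ : U →ₐ[F] A, ∀ x : L, φ (ι x) = jmap x)
    -- the dual module `L*` is a `U`-module restricting to the coadjoint action:
    (σ : U →ₐ[F] Module.End F (Module.Dual F L))
    (hσ : ∀ a b : ZMod 2, ∀ x ∈ g a, ∀ f : Module.Dual F L,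
      (∀ y ∈ g (b + 1), f y = 0) →
      ∀ y : L, σ (ι x) f y = - sgn F (a * b) * f (br x y))
    -- `ψ` is a homogeneous superderivation of parity `pψ` from `L` into `L*`:
    (pψ : ZMod 2) (ψ : L →ₗ[F] Module.Dual F L)
    (hψg : ∀ a : ZMod 2, ∀ x ∈ g a, ∀ y ∈ g (a + pψ + 1), ψ x y = 0)
    (hLeib : ∀ a b : ZMod 2, ∀ x ∈ g a, ∀ y ∈ g b,
      ψ (br x y) = sgn F (pψ * a) • σ (ι x) (ψ y)
                 - sgn F ((pψ + a) * b) • σ (ι y) (ψ x))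
    (x : L) (hx : x ∈ g 0)
    (hcentral : ∀ u : U, ι x ^ p ^ t * u = u * ι x ^ p ^ t) :
    σ (ι x ^ (p ^ t - 1)) (ψ x) = 0 := by
  classical
  have hq1 : 1 ≤ p ^ t := Nat.one_le_pow _ _ hp.pos
  have hn1 : p ^ t - 1 + 1 = p ^ t := Nat.sub_add_cancel hq1
  -- basic sign facts
  have hsgn_sq : ∀ c : ZMod 2, sgn F c * sgn F c = 1 := by
    intro c; unfold sgn; split <;> ring
  have hsgn_ne : ∀ c : ZMod 2, sgn F c ≠ 0 := by
    intro c; unfold sgn; split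
    · exact one_ne_zero
    · exact neg_ne_zero.mpr one_ne_zero
  have hsgn0 : sgn F 0 = 1 := if_pos rfl
  have hz2 : ∀ c : ZMod 2, c + 1 + 1 = c := by decide
  have hZcases : ∀ i : ZMod 2, i = 0 ∨ i = 1 := by decide
  have hZne : ∀ c : ZMod 2, c ≠ c + 1 := by decide
  have hZall : ∀ c i : ZMod 2, i = c ∨ i = c + 1 := by decide
  have hpF : (p : F) = 0 := CharP.cast_eq_zero F p
  -- decomposition into homogeneous parts
  have hdecomp : ∀ u : L, ∃ u0 ∈ g 0, ∃ u1 ∈ g 1, u = u0 + u1 := by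
    have htop := hg.submodule_iSup_eq_top
    intro u
    have hsup : iSup g ≤ g 0 ⊔ g 1 := by
      refine iSup_le fun i => ?_
      rcases hZcases i with h | h <;> rw [h]
      · exact le_sup_left
      · exact le_sup_right
    have hu : u ∈ g 0 ⊔ g 1 := hsup (htop ▸ Submodule.mem_top)
    obtain ⟨u0, hu0, u1, hu1, h⟩ := Submodule.mem_sup.mp hu
    exact ⟨u0, hu0, u1, hu1, h.symm⟩
  have hcompl : ∀ c : ZMod 2, IsCompl (g c) (g (c + 1)) := by
    intro c
    refine hg.isCompl (hZne c) ?_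
    ext i
    simp only [Set.mem_univ, Set.mem_insert_iff, Set.mem_singleton_iff, true_iff]
    exact hZall c i
  -- the adjoint action of x
  set A : Module.End F L := br x with hAdef
  have hA_grade : ∀ c : ZMod 2, ∀ y ∈ g c, A y ∈ g c := by
    intro c y hy
    have := hbrg 0 c x hx y hy
    rwa [zero_add] at this
  have hAk_grade : ∀ k : ℕ, ∀ c : ZMod 2, ∀ y ∈ g c, (A ^ k) y ∈ g c := by
    intro k
    induction k with
    | zero => intro c y hy; simpa using hy
    | succ k ih =>
      intro c y hy
      rw [pow_succ, Module.End.mul_apply]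
      exact ih c (A y) (hA_grade c y hy)
  -- commutator formula in U
  have hcommU : ∀ b : ZMod 2, ∀ u ∈ g b, ι x * ι u - ι u * ι x = ι (A u) := by
    intro b u hu
    have := hι 0 b x hx u hu
    rw [zero_mul, hsgn0, one_smul] at this
    rw [hAdef]
    exact this.symm
  -- adop = left mult minus right mult by ι x, is nilpotent of order p^t
  set adop : Module.End F U := LinearMap.mulLeft F (ι x) - LinearMap.mulRight F (ι x) with hadopdef
  have hadop_apply : ∀ w : U, adop w = ι x * w - w * ι x := by
    intro w
    rw [hadopdef]
    simp [LinearMap.sub_apply]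
  have hadq : adop ^ p ^ t = 0 := by
    have hcommlr : Commute (LinearMap.mulLeft F (ι x)) (LinearMap.mulRight F (ι x)) :=
      LinearMap.commute_mulLeft_right (ι x) (ι x)
    have hpEnd : (p : Module.End F U) = 0 := by
      have h := map_natCast (algebraMap F (Module.End F U)) p
      rw [← h, hpF, map_zero]
    rw [hadopdef, aux_sub_pow hp hpEnd t hcommlr, LinearMap.pow_mulLeft, LinearMap.pow_mulRight]
    ext w
    simp [LinearMap.sub_apply, hcentral w, sub_eq_zero]
  have hιA : ∀ b : ZMod 2, ∀ u ∈ g b, ∀ k : ℕ, ι ((A ^ k) u) = (adop ^ k) (ι u) := by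
    intro b u hu k
    induction k with
    | zero => simp
    | succ k ih =>
      rw [pow_succ', pow_succ', Module.End.mul_apply, Module.End.mul_apply, hadop_apply, ← ih]
      exact (hcommU b _ (hAk_grade k b u hu)).symm
  -- if ι w = 0 for homogeneous w then w annihilates L on the left
  have hker : ∀ a : ZMod 2, ∀ w ∈ g a, ι w = 0 → ∀ y : L, br w y = 0 := by
    intro a w hw h0 y
    have hcomp : ∀ b : ZMod 2, ∀ yb ∈ g b, br w yb = 0 := by
      intro b yb hyb
      have hv : br w yb ∈ g (a + b) := hbrg a b w hw yb hyb
      refine (Module.forall_dual_apply_eq_zero_iff F (br w yb)).mp ?_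
      intro φ
      set pr : L →ₗ[F] g (a + b) :=
        (g (a + b)).projectionOnto (g (a + b + 1)) (hcompl (a + b)) with hprdef
      set h : Module.Dual F L := φ ∘ₗ ((g (a + b)).subtype ∘ₗ pr) with hhdef
      have hh : ∀ z ∈ g (a + b + 1), h z = 0 := by
        intro z hz
        rw [hhdef]
        simp [hprdef, Submodule.projectionOnto_apply_of_mem_right (hcompl (a + b)) hz]
      have hφv : h (br w yb) = φ (br w yb) := by
        rw [hhdef]
        have : pr (br w yb) = ⟨br w yb, hv⟩ := by
          rw [hprdef]
          exact Submodule.projectionOnto_apply_left (hcompl (a + b)) ⟨br w yb, hv⟩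
        simp [this]
      have hσw := hσ a (a + b) w hw h hh yb
      rw [h0, map_zero, LinearMap.zero_apply, LinearMap.zero_apply] at hσw
      have h1 : sgn F (a * (a + b)) * h (br w yb) = 0 := by
        rw [← neg_eq_zero, ← neg_mul]
        exact hσw.symm
      rcases mul_eq_zero.mp h1 with h2 | h2
      · exact absurd h2 (hsgn_ne _)
      · rw [← hφv]; exact h2
    obtain ⟨y0, hy0, y1, hy1, hy⟩ := hdecomp y
    rw [hy, map_add, hcomp 0 y0 hy0, hcomp 1 y1 hy1, add_zero]
  -- the right annihilator ideal is zero
  set Cr : Submodule F L := ⨅ z : L, LinearMap.ker (br z) with hCrdef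
  have hCr_mem : ∀ u : L, u ∈ Cr ↔ ∀ z : L, br z u = 0 := by
    intro u
    rw [hCrdef]
    simp [Submodule.mem_iInf, LinearMap.mem_ker]
  have hCr_bot : Cr = ⊥ := by
    have hideal : ∀ w u : L, u ∈ Cr → br w u ∈ Cr := by
      intro w u hu
      rw [hCr_mem] at hu ⊢
      intro z
      obtain ⟨z0, hz0, z1, hz1, hz⟩ := hdecomp z
      obtain ⟨w0, hw0, w1, hw1, hw⟩ := hdecomp w
      have key : ∀ (a b : ZMod 2), ∀ za ∈ g a, ∀ wb ∈ g b, br za (br wb u) = 0 := by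
        intro a b za hza wb hwb
        rw [hjac a b za hza wb hwb u, hu (br za wb), hu za, map_zero, smul_zero, add_zero]
      rw [hz, hw]
      simp only [map_add, LinearMap.add_apply]
      rw [key 0 0 z0 hz0 w0 hw0, key 0 1 z0 hz0 w1 hw1, key 1 0 z1 hz1 w0 hw0,
        key 1 1 z1 hz1 w1 hw1]
      simp
    rcases hsimple Cr hideal with h | h
    · exact h
    · exfalso
      apply hnonab
      ext u z
      have hz : z ∈ Cr := h ▸ Submodule.mem_top
      rw [hCr_mem] at hz
      simp [hz u]
  -- A^(p^t) = 0
  have hAq_hom : ∀ b : ZMod 2, ∀ u ∈ g b, (A ^ p ^ t) u = 0 := by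
    intro b u hu
    have hι0 : ι ((A ^ p ^ t) u) = 0 := by
      rw [hιA b u hu (p ^ t), hadq, LinearMap.zero_apply]
    have hleft : ∀ y : L, br ((A ^ p ^ t) u) y = 0 := hker b _ (hAk_grade _ b u hu) hι0
    have hright : (A ^ p ^ t) u ∈ Cr := by
      rw [hCr_mem]
      intro z
      obtain ⟨z0, hz0, z1, hz1, hz⟩ := hdecomp z
      have hrr : ∀ a : ZMod 2, ∀ za ∈ g a, br za ((A ^ p ^ t) u) = 0 := by
        intro a za hza
        rw [hskew a b za hza _ (hAk_grade _ b u hu), hleft za, smul_zero]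
      rw [hz, map_add, LinearMap.add_apply]
      rw [hrr 0 z0 hz0, hrr 1 z1 hz1, add_zero]
    rw [hCr_bot, Submodule.mem_bot] at hright
    exact hright
  have hAq : ∀ u : L, (A ^ p ^ t) u = 0 := by
    intro u
    obtain ⟨u0, hu0, u1, hu1, hu⟩ := hdecomp u
    rw [hu, map_add, hAq_hom 0 u0 hu0, hAq_hom 1 u1 hu1, add_zero]
  -- the coadjoint operator D = σ (ι x)
  set D : Module.End F (Module.Dual F L) := σ (ι x) with hDdef
  have hDstep : ∀ c : ZMod 2, ∀ f : Module.Dual F L, (∀ y ∈ g c, f y = 0) →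
      ∀ y : L, (D f) y = - f (A y) := by
    intro c f hf y
    have h1 := hσ 0 (c + 1) x hx f (fun z hz => hf z (by rwa [hz2 c] at hz)) y
    rw [zero_mul, hsgn0, neg_one_mul] at h1
    rw [hDdef, hAdef]
    exact h1
  have hDk : ∀ c : ZMod 2, ∀ f : Module.Dual F L, (∀ y ∈ g c, f y = 0) → ∀ k : ℕ,
      (∀ y : L, ((D ^ k) f) y = ((-1 : F) ^ k) * f ((A ^ k) y)) ∧
      (∀ y ∈ g c, ((D ^ k) f) y = 0) := by
    intro c f hf k
    induction k with
    | zero =>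
      constructor
      · intro y; simp
      · intro y hy; simpa using hf y hy
    | succ k ih =>
      constructor
      · intro y
        rw [pow_succ', Module.End.mul_apply, hDstep c ((D ^ k) f) ih.2 y, ih.1 (A y)]
        rw [show (A ^ k) (A y) = (A ^ (k + 1)) y by rw [pow_succ, Module.End.mul_apply]]
        ring
      · intro y hy
        rw [pow_succ', Module.End.mul_apply, hDstep c ((D ^ k) f) ih.2 y,
          ih.2 (A y) (hA_grade c y hy), neg_zero]
  have hDq : ∀ c : ZMod 2, ∀ f : Module.Dual F L, (∀ y ∈ g c, f y = 0) →
      (D ^ p ^ t) f = 0 := by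
    intro c f hf
    ext y
    rw [(hDk c f hf (p ^ t)).1 y, hAq y, map_zero, mul_zero, LinearMap.zero_apply]
  have hDψq : ∀ u : L, (D ^ p ^ t) (ψ u) = 0 := by
    have hhom : ∀ b : ZMod 2, ∀ u ∈ g b, (D ^ p ^ t) (ψ u) = 0 := by
      intro b u hu
      exact hDq (b + pψ + 1) (ψ u) (hψg b u hu)
    intro u
    obtain ⟨u0, hu0, u1, hu1, hu⟩ := hdecomp u
    rw [hu, map_add, map_add, hhom 0 u0 hu0, hhom 1 u1 hu1, add_zero]
  -- the operator T on Hom(L, L*)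
  set Dl : AddMonoid.End (L →ₗ[F] Module.Dual F L) :=
    AddMonoidHom.mk' (fun χ : L →ₗ[F] Module.Dual F L => D ∘ₗ χ) (fun χ1 χ2 => by ext u; simp) with hDldef
  set Ar : AddMonoid.End (L →ₗ[F] Module.Dual F L) :=
    AddMonoidHom.mk' (fun χ : L →ₗ[F] Module.Dual F L => χ ∘ₗ A) (fun χ1 χ2 => by ext u; simp) with hArdef
  have hDl_apply : ∀ (χ : L →ₗ[F] Module.Dual F L) (u : L), (Dl χ) u = D (χ u) :=
    fun χ u => rfl
  have hAr_apply : ∀ (χ : L →ₗ[F] Module.Dual F L) (u : L), (Ar χ) u = χ (A u) :=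
    fun χ u => rfl
  set T : AddMonoid.End (L →ₗ[F] Module.Dual F L) := Dl - Ar with hTdef
  have hT_apply : ∀ (χ : L →ₗ[F] Module.Dual F L) (u : L), (T χ) u = D (χ u) - χ (A u) := by
    intro χ u
    rw [hTdef, (show ∀ (f g : AddMonoid.End (L →ₗ[F] Module.Dual F L)) (χ : L →ₗ[F] Module.Dual F L), (f - g) χ = f χ - g χ from fun _ _ _ => rfl), LinearMap.sub_apply, hDl_apply, hAr_apply]
  have hDl_pow : ∀ (k : ℕ) (χ : L →ₗ[F] Module.Dual F L) (u : L),
      ((Dl ^ k) χ) u = (D ^ k) (χ u) := by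
    intro k
    induction k with
    | zero => intro χ u; rfl
    | succ k ih =>
      intro χ u
      have h1 : (Dl ^ (k + 1)) χ = Dl ((Dl ^ k) χ) := by
        rw [pow_succ']; rfl
      rw [h1, hDl_apply, ih, pow_succ', Module.End.mul_apply]
  have hAr_pow : ∀ (k : ℕ) (χ : L →ₗ[F] Module.Dual F L) (u : L),
      ((Ar ^ k) χ) u = χ ((A ^ k) u) := by
    intro k
    induction k with
    | zero => intro χ u; rfl
    | succ k ih =>
      intro χ u
      have h1 : (Ar ^ (k + 1)) χ = Ar ((Ar ^ k) χ) := by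
        rw [pow_succ']; rfl
      rw [h1, hAr_apply, ih, pow_succ, Module.End.mul_apply]
  have hTq : (T ^ p ^ t) ψ = 0 := by
    have hcommDA : Commute Dl Ar :=
      AddMonoidHom.ext fun χ => LinearMap.ext fun u => rfl
    have hpEnd2 : (p : AddMonoid.End (L →ₗ[F] Module.Dual F L)) = 0 := by
      refine AddMonoidHom.ext fun χ => ?_
      show (p : AddMonoid.End (L →ₗ[F] Module.Dual F L)) χ = 0
      have h1 : (p : AddMonoid.End (L →ₗ[F] Module.Dual F L)) χ = p • χ := rfl
      rw [h1, ← Nat.cast_smul_eq_nsmul F p χ, hpF, zero_smul]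
    rw [hTdef, aux_sub_pow hp hpEnd2 t hcommDA]
    rw [(show ∀ (f g : AddMonoid.End (L →ₗ[F] Module.Dual F L)) (χ : L →ₗ[F] Module.Dual F L), (f - g) χ = f χ - g χ from fun _ _ _ => rfl)]
    ext u
    rw [LinearMap.sub_apply, hDl_pow, hAr_pow, hAq u, map_zero, hDψq u]
    simp
  -- the key induction: coadjoint action on D^k (ψ x)
  have hchi : ∀ k : ℕ, ∀ b : ZMod 2, ∀ u ∈ g b,
      σ (ι u) ((D ^ k) (ψ x)) = sgn F (pψ * b) • (((T ^ (k + 1)) ψ) u) := by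
    intro k
    induction k with
    | zero =>
      intro b u hu
      have hL := hLeib b 0 u hu x hx
      rw [mul_zero, hsgn0, one_smul] at hL
      have hsk := hskew b 0 u hu x hx
      rw [mul_zero, hsgn0, neg_one_smul] at hsk
      rw [hsk, map_neg] at hL
      have h2 : sgn F (pψ * b) • σ (ι u) (ψ x) = σ (ι x) (ψ u) - ψ (br x u) := by
        calc sgn F (pψ * b) • σ (ι u) (ψ x)
            = (sgn F (pψ * b) • σ (ι u) (ψ x) - σ (ι x) (ψ u)) + σ (ι x) (ψ u) := by abel
          _ = -(ψ (br x u)) + σ (ι x) (ψ u) := by rw [← hL]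
          _ = σ (ι x) (ψ u) - ψ (br x u) := by abel
      rw [pow_zero, Module.End.one_apply, pow_one, hT_apply]
      have hbx : ψ (A u) = ψ (br x u) := by rw [hAdef]
      rw [hbx, ← h2, smul_smul, hsgn_sq, one_smul]
    | succ k ih =>
      intro b u hu
      have hcu : ι u * ι x = ι x * ι u - ι (A u) := by
        rw [← hcommU b u hu]; abel
      calc σ (ι u) ((D ^ (k + 1)) (ψ x))
          = σ (ι u * ι x) ((D ^ k) (ψ x)) := by
            rw [pow_succ', Module.End.mul_apply, map_mul, Module.End.mul_apply, ← hDdef]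
        _ = σ (ι x * ι u) ((D ^ k) (ψ x)) - σ (ι (A u)) ((D ^ k) (ψ x)) := by
            rw [hcu, map_sub, LinearMap.sub_apply]
        _ = D (σ (ι u) ((D ^ k) (ψ x))) - σ (ι (A u)) ((D ^ k) (ψ x)) := by
            rw [map_mul, Module.End.mul_apply, ← hDdef]
        _ = D (sgn F (pψ * b) • ((T ^ (k + 1)) ψ) u)
              - sgn F (pψ * b) • ((T ^ (k + 1)) ψ) (A u) := by
            rw [ih b u hu, ih b (A u) (hA_grade b u hu)]
        _ = sgn F (pψ * b) • (D (((T ^ (k + 1)) ψ) u) - ((T ^ (k + 1)) ψ) (A u)) := by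
            rw [map_smul, smul_sub]
        _ = sgn F (pψ * b) • ((T ((T ^ (k + 1)) ψ)) u) := by rw [hT_apply]
        _ = sgn F (pψ * b) • (((T ^ (k + 1 + 1)) ψ) u) := by
            have hstep : (T ^ (k + 1 + 1)) ψ = T ((T ^ (k + 1)) ψ) := by
              rw [pow_succ']; rfl
            rw [hstep]
  -- the element gE := D^(p^t - 1) (ψ x) is killed by all coadjoint operators
  have hkey : ∀ b : ZMod 2, ∀ u ∈ g b, σ (ι u) ((D ^ (p ^ t - 1)) (ψ x)) = 0 := by
    intro b u hu
    have h1 := hchi (p ^ t - 1) b u hu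
    rw [hn1, hTq] at h1
    rw [h1, LinearMap.zero_apply, smul_zero]
  -- gE vanishes on g (pψ + 1)
  have hgEvan : ∀ y ∈ g (pψ + 1), ((D ^ (p ^ t - 1)) (ψ x)) y = 0 := by
    have hψx : ∀ y ∈ g (pψ + 1), ψ x y = 0 := by
      intro y hy
      exact hψg 0 x hx y (by rwa [zero_add])
    exact (hDk (pψ + 1) (ψ x) hψx (p ^ t - 1)).2
  -- gE kills all brackets
  have hbr0 : ∀ u v : L, ((D ^ (p ^ t - 1)) (ψ x)) (br u v) = 0 := by
    have hhom : ∀ b : ZMod 2, ∀ u ∈ g b, ∀ v : L,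
        ((D ^ (p ^ t - 1)) (ψ x)) (br u v) = 0 := by
      intro b u hu v
      have h1 := hσ b pψ u hu ((D ^ (p ^ t - 1)) (ψ x)) hgEvan v
      rw [hkey b u hu, LinearMap.zero_apply] at h1
      have h2 : sgn F (b * pψ) * ((D ^ (p ^ t - 1)) (ψ x)) (br u v) = 0 := by
        rw [← neg_eq_zero, ← neg_mul]
        exact h1.symm
      rcases mul_eq_zero.mp h2 with h3 | h3
      · exact absurd h3 (hsgn_ne _)
      · exact h3
    intro u v
    obtain ⟨u0, hu0, u1, hu1, hu⟩ := hdecomp u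
    rw [hu, map_add, LinearMap.add_apply, map_add, hhom 0 u0 hu0 v, hhom 1 u1 hu1 v, add_zero]
  -- brackets span L by simplicity
  set I : Submodule F L := Submodule.span F {z : L | ∃ u v : L, br u v = z} with hIdef
  have hItop : I = ⊤ := by
    have hideal : ∀ w z : L, z ∈ I → br w z ∈ I := by
      intro w z hz
      have hmap : Submodule.map (br w) I ≤ I := by
        rw [hIdef, Submodule.map_span]
        refine Submodule.span_le.mpr ?_
        rintro _ ⟨z', ⟨u, v, rfl⟩, rfl⟩
        exact Submodule.subset_span ⟨w, br u v, rfl⟩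
      exact hmap ⟨z, hz, rfl⟩
    rcases hsimple I hideal with h | h
    · exfalso
      apply hnonab
      ext u v
      have : br u v ∈ I := Submodule.subset_span ⟨u, v, rfl⟩
      rw [h, Submodule.mem_bot] at this
      simp [this]
    · exact h
  -- conclusion
  have hfinal : ∀ z : L, ((D ^ (p ^ t - 1)) (ψ x)) z = 0 := by
    intro z
    have hz : z ∈ I := by rw [hItop]; trivial
    induction hz using Submodule.span_induction with
    | mem z' hz' =>
      obtain ⟨u, v, rfl⟩ := hz'
      exact hbr0 u v
    | zero => simp
    | add a b _ _ ha hb => rw [map_add, ha, hb, add_zero]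
    | smul r a _ ha => rw [map_smul, ha, smul_zero]
  rw [map_pow]
  ext z
  rw [← hDdef]
  exact hfinal z
end

section
/- Define, on the superalgebra 𝒪(n,n; t̲) = 𝒪(n; t̲) ⊗ Λ(n), the odd linear operator T_H(a) = Σ_{i=1}^{2n} (−1)^{p(∂_i)p(a)} ∂_i(a) ∂_{i'}, where i' = i + n for i ≤ n and i' = i − n for n+1 ≤ i ≤ 2n. Then for all homogeneous a, b ∈ 𝒪(n,n; t̲): [T_H(a), T_H(b)] = T_H(T_H(a)(b)), where the bracket is the supercommutator of superderivations. -/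
open scoped Classical
noncomputable section

/-- Index of a monomial `x^(α) x^u` of `𝒪(n, n'; t̲)`: a divided power exponent
`α : Fin n → ℕ` for the even variables and a subset `u` of the `n'` odd
variables. -/
abbrev SIdx (n n' : ℕ) : Type := (Fin n → ℕ) × Finset (Fin n')

/-- The superalgebra `𝒪(n, n'; t̲)` (divided powers ⊗ exterior algebra), as the
free module on the monomials (monomials with an exponent out of range multiply
to zero automatically in characteristic `p`). -/
abbrev SAlg (F : Type*) [Field F] (n n' : ℕ) : Type _ := SIdx n n' →₀ F

variable {F : Type*} [Field F] {n n' : ℕ}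

/-- The Koszul sign produced when multiplying `x^u · x^v`. -/
def mulSign (F : Type*) [Field F] {n' : ℕ} (u v : Finset (Fin n')) : F :=
  (-1 : F) ^ ((u ×ˢ v).filter fun q => q.2 < q.1).card

/-- Product of two monomials: `x^(α)x^u · x^(β)x^v = ± C(α+β, α) x^(α+β) x^{u∪v}`
if `u ∩ v = ∅`, and `0` otherwise. -/
def sMulB (q r : SIdx n n') : SAlg F n n' :=
  if Disjoint q.2 r.2 then
    (mulSign F q.2 r.2 * ∏ i, ((q.1 i + r.1 i).choose (q.1 i) : F)) •
      Finsupp.single (fun i => q.1 i + r.1 i, q.2 ∪ r.2) (1 : F)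
  else 0

/-- The (super-commutative) multiplication of `𝒪(n, n'; t̲)`. -/
def sMul (f g : SAlg F n n') : SAlg F n n' :=
  f.sum fun q c => g.sum fun r d => (c * d) • sMulB q r

/-- The even partial derivative `∂_i`, `i ∈ {1, …, n}`: `∂_i(x^(α)) = x^(α-ε_i)`. -/
def De (i : Fin n) (f : SAlg F n n') : SAlg F n n' :=
  f.sum fun q c =>
    if 0 < q.1 i then Finsupp.single (Function.update q.1 i (q.1 i - 1), q.2) c
    else 0

/-- The odd partial derivative `∂_j` with respect to the `j`-th odd variable. -/
def Do (j : Fin n') (f : SAlg F n n') : SAlg F n n' :=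
  f.sum fun q c =>
    if j ∈ q.2 then
      ((-1 : F) ^ (q.2.filter fun k => k < j).card * c) •
        Finsupp.single (q.1, q.2.erase j) (1 : F)
    else 0

/-- `f` is ℤ₂-homogeneous of parity `c`. -/
def IsHomog (c : ZMod 2) (f : SAlg F n n') : Prop :=
  ∀ q ∈ f.support, ((q.2.card : ZMod 2) = c)

/-- All exponents appearing in `f` are bounded by `π_i = p^{t_i} - 1`, i.e. `f`
lies in the truncated algebra `𝒪(n, n'; t̲)`. -/
def Bounded (p : ℕ) (t : Fin n → ℕ) (f : SAlg F n n') : Prop :=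
  ∀ q ∈ f.support, ∀ i, Prod.fst q i ≤ p ^ t i - 1

/-- `T_H(a)`, for `a` homogeneous of parity `pa`, as an operator on
`𝒪(n, n; t̲)`:  `T_H(a) = Σ_{i=1}^{2n} (-1)^{p(∂_i) p(a)} ∂_i(a) ∂_{i'}`. -/
def TH (pa : ZMod 2) (a b : SAlg F n n) : SAlg F n n :=
  (∑ i : Fin n, sMul (De i a) (Do i b)) +
    sgn F pa • ∑ i : Fin n, sMul (Do i a) (De i b)

/-! ### Sign lemmas -/

lemma zmod2_cases : ∀ a : ZMod 2, a = 0 ∨ a = 1 := by decide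

@[simp] lemma sgn_zero : sgn F 0 = 1 := rfl

@[simp] lemma sgn_one : sgn F 1 = -1 := by simp [sgn]

lemma sgn_add (x y : ZMod 2) : sgn F (x + y) = sgn F x * sgn F y := by
  rcases zmod2_cases x with h | h <;> rcases zmod2_cases y with h' | h' <;>
    subst h h' <;> simp [sgn, show (1 + 1 : ZMod 2) = 0 by decide]

lemma sgn_mul_self (x : ZMod 2) : sgn F x * sgn F x = 1 := by
  rcases zmod2_cases x with h | h <;> subst h <;> simp

lemma sgn_natCast (k : ℕ) : sgn F (k : ZMod 2) = (-1 : F) ^ k := by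
  induction k with
  | zero => simp
  | succ m ih =>
      push_cast
      rw [sgn_add, ih, pow_succ, sgn_one]

/-! ### Linearity of `De`, `Do`, `sMul` -/

lemma De_single (i : Fin n) (q : SIdx n n') (c : F) :
    De i (Finsupp.single q c) =
      if 0 < q.1 i then Finsupp.single (Function.update q.1 i (q.1 i - 1), q.2) c else 0 :=
  Finsupp.sum_single_index (by split <;> simp)

@[simp] lemma De_zero (i : Fin n) : De i (0 : SAlg F n n') = 0 :=
  Finsupp.sum_zero_index

lemma De_add (i : Fin n) (f g : SAlg F n n') : De i (f + g) = De i f + De i g :=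
  Finsupp.sum_add_index' (fun q => by split <;> simp)
    (fun q c d => by split <;> simp [Finsupp.single_add])

lemma De_smul (i : Fin n) (c : F) (f : SAlg F n n') : De i (c • f) = c • De i f := by
  unfold De
  rw [Finsupp.sum_smul_index' (fun q => by split <;> simp), Finsupp.smul_sum]
  refine Finsupp.sum_congr fun q _ => ?_
  split <;> simp [Finsupp.smul_single]

lemma Do_single (j : Fin n') (q : SIdx n n') (c : F) :
    Do j (Finsupp.single q c) =
      if j ∈ q.2 then
        ((-1 : F) ^ (q.2.filter fun k => k < j).card * c) •
          Finsupp.single (q.1, q.2.erase j) (1 : F)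
      else 0 :=
  Finsupp.sum_single_index (by split <;> simp)

@[simp] lemma Do_zero (j : Fin n') : Do j (0 : SAlg F n n') = 0 :=
  Finsupp.sum_zero_index

lemma Do_add (j : Fin n') (f g : SAlg F n n') : Do j (f + g) = Do j f + Do j g :=
  Finsupp.sum_add_index' (fun q => by split <;> simp)
    (fun q c d => by split <;> simp [mul_add, add_smul])

lemma Do_smul (j : Fin n') (c : F) (f : SAlg F n n') : Do j (c • f) = c • Do j f := by
  unfold Do
  rw [Finsupp.sum_smul_index' (fun q => by split <;> simp), Finsupp.smul_sum]
  refine Finsupp.sum_congr fun q _ => ?_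
  split
  · rw [smul_eq_mul, smul_smul]; congr 1; ring
  · simp

@[simp] lemma zero_sMul (g : SAlg F n n') : sMul 0 g = 0 :=
  Finsupp.sum_zero_index

@[simp] lemma sMul_zero (f : SAlg F n n') : sMul f 0 = 0 := by
  unfold sMul
  simp [Finsupp.sum_zero_index]

lemma sMul_single_single (q r : SIdx n n') (c d : F) :
    sMul (Finsupp.single q c) (Finsupp.single r d) = (c * d) • sMulB q r := by
  unfold sMul
  rw [Finsupp.sum_single_index (by simp [Finsupp.sum_zero_index, Finsupp.sum_single_index]),
    Finsupp.sum_single_index (by simp)]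

lemma add_sMul (f g h : SAlg F n n') : sMul (f + g) h = sMul f h + sMul g h :=
  Finsupp.sum_add_index' (fun q => by simp)
    (fun q c d => by
      rw [← Finsupp.sum_add]
      refine Finsupp.sum_congr fun r _ => ?_
      simp [add_mul, add_smul])

lemma sMul_add (f g h : SAlg F n n') : sMul f (g + h) = sMul f g + sMul f h := by
  unfold sMul
  rw [← Finsupp.sum_add]
  refine Finsupp.sum_congr fun q _ => ?_
  exact Finsupp.sum_add_index' (fun r => by simp)
    (fun r c d => by simp [mul_add, add_smul])

lemma smul_sMul (c : F) (f g : SAlg F n n') : sMul (c • f) g = c • sMul f g := by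
  unfold sMul
  rw [Finsupp.sum_smul_index' (fun q => by simp), Finsupp.smul_sum]
  refine Finsupp.sum_congr fun q _ => ?_
  rw [Finsupp.smul_sum]
  refine Finsupp.sum_congr fun r _ => ?_
  simp [smul_smul, mul_assoc]

lemma sMul_smul (c : F) (f g : SAlg F n n') : sMul f (c • g) = c • sMul f g := by
  unfold sMul
  rw [Finsupp.smul_sum]
  refine Finsupp.sum_congr fun q _ => ?_
  rw [Finsupp.sum_smul_index' (fun r => by simp), Finsupp.smul_sum]
  refine Finsupp.sum_congr fun r _ => ?_
  simp [smul_smul, mul_left_comm]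
/-! ### Sums -/

lemma De_sum {κ : Type*} (i : Fin n) (s : Finset κ) (f : κ → SAlg F n n') :
    De i (∑ j ∈ s, f j) = ∑ j ∈ s, De i (f j) := by
  classical
  induction s using Finset.induction_on with
  | empty => simp
  | insert _ _ h ih => rw [Finset.sum_insert h, De_add, ih, Finset.sum_insert h]

lemma Do_sum {κ : Type*} (i : Fin n') (s : Finset κ) (f : κ → SAlg F n n') :
    Do i (∑ j ∈ s, f j) = ∑ j ∈ s, Do i (f j) := by
  classical
  induction s using Finset.induction_on with
  | empty => simp
  | insert _ _ h ih => rw [Finset.sum_insert h, Do_add, ih, Finset.sum_insert h]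

lemma sMul_sum {κ : Type*} (f : SAlg F n n') (s : Finset κ) (g : κ → SAlg F n n') :
    sMul f (∑ j ∈ s, g j) = ∑ j ∈ s, sMul f (g j) := by
  classical
  induction s using Finset.induction_on with
  | empty => simp
  | insert _ _ h ih => rw [Finset.sum_insert h, sMul_add, ih, Finset.sum_insert h]

lemma sum_sMul {κ : Type*} (s : Finset κ) (g : κ → SAlg F n n') (f : SAlg F n n') :
    sMul (∑ j ∈ s, g j) f = ∑ j ∈ s, sMul (g j) f := by
  classical
  induction s using Finset.induction_on with
  | empty => simp
  | insert _ _ h ih => rw [Finset.sum_insert h, add_sMul, ih, Finset.sum_insert h]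

/-! ### mulSign combinatorics -/

lemma disjoint_product_left {u v w : Finset (Fin n')} (h : Disjoint u v) :
    Disjoint (u ×ˢ w) (v ×ˢ w) := by
  rw [Finset.disjoint_left] at h ⊢
  intro p hp hq
  exact h (Finset.mem_product.1 hp).1 (Finset.mem_product.1 hq).1

lemma disjoint_product_right {u v w : Finset (Fin n')} (h : Disjoint v w) :
    Disjoint (u ×ˢ v) (u ×ˢ w) := by
  rw [Finset.disjoint_left] at h ⊢
  intro p hp hq
  exact h (Finset.mem_product.1 hp).2 (Finset.mem_product.1 hq).2

lemma mulSign_union_left {u v w : Finset (Fin n')} (h : Disjoint u v) :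
    mulSign F (u ∪ v) w = mulSign F u w * mulSign F v w := by
  unfold mulSign
  rw [← pow_add]
  congr 1
  rw [Finset.union_product, Finset.filter_union, Finset.card_union_of_disjoint]
  exact Finset.disjoint_filter_filter (disjoint_product_left h)

lemma mulSign_union_right {u v w : Finset (Fin n')} (h : Disjoint v w) :
    mulSign F u (v ∪ w) = mulSign F u v * mulSign F u w := by
  unfold mulSign
  rw [← pow_add]
  congr 1
  rw [Finset.product_union, Finset.filter_union, Finset.card_union_of_disjoint]
  exact Finset.disjoint_filter_filter (disjoint_product_right h)

lemma mulSign_mul_self (u v : Finset (Fin n')) : mulSign F u v * mulSign F u v = 1 := by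
  unfold mulSign
  rw [← pow_add]
  exact Even.neg_one_pow ⟨_, rfl⟩

lemma mulSign_mul_comm {u v : Finset (Fin n')} (h : Disjoint u v) :
    mulSign F u v * mulSign F v u = (-1 : F) ^ (u.card * v.card) := by
  unfold mulSign
  rw [← pow_add]
  congr 1
  have hswap : ((v ×ˢ u).filter fun q => q.2 < q.1).card
      = ((u ×ˢ v).filter fun q => q.1 < q.2).card := by
    apply Finset.card_bij (fun q _ => (q.2, q.1))
    · intro q hq
      simp only [Finset.mem_filter, Finset.mem_product] at hq ⊢
      exact ⟨⟨hq.1.2, hq.1.1⟩, hq.2⟩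
    · intro q hq q' hq' hqq
      exact Prod.ext_iff.2 ⟨congrArg Prod.snd hqq, congrArg Prod.fst hqq⟩
    · intro q hq
      refine ⟨(q.2, q.1), ?_, rfl⟩
      simp only [Finset.mem_filter, Finset.mem_product] at hq ⊢
      exact ⟨⟨hq.1.2, hq.1.1⟩, hq.2⟩
  rw [hswap]
  have hiff : ∀ q ∈ u ×ˢ v, (¬ q.2 < q.1) ↔ q.1 < q.2 := by
    intro q hq
    have hm := Finset.mem_product.1 hq
    have hne : q.1 ≠ q.2 := fun e => (Finset.disjoint_left.1 h) hm.1 (e ▸ hm.2)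
    constructor
    · intro hnlt; exact lt_of_le_of_ne (not_lt.1 hnlt) hne
    · intro hlt hlt'; exact absurd (lt_trans hlt hlt') (lt_irrefl _)
  rw [← Finset.filter_congr hiff, Finset.card_filter_add_card_filter_not,
    Finset.card_product]

lemma mulSign_comm {u v : Finset (Fin n')} (h : Disjoint u v) :
    mulSign F u v = (-1 : F) ^ (u.card * v.card) * mulSign F v u := by
  calc mulSign F u v = mulSign F u v * (mulSign F v u * mulSign F v u) := by
        rw [mulSign_mul_self, mul_one]
    _ = (mulSign F u v * mulSign F v u) * mulSign F v u := by ring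
    _ = (-1 : F) ^ (u.card * v.card) * mulSign F v u := by rw [mulSign_mul_comm h]

lemma singleton_product_filter_card (j : Fin n') (v : Finset (Fin n')) :
    (({j} ×ˢ v).filter fun q => q.2 < q.1).card = (v.filter fun k => k < j).card := by
  have : (({j} ×ˢ v).filter fun q => q.2 < q.1)
      = (v.filter fun k => k < j).image fun k => (j, k) := by
    ext ⟨a, b⟩
    simp only [Finset.mem_filter, Finset.mem_product, Finset.mem_singleton,
      Finset.mem_image, Prod.mk.injEq]
    constructor
    · rintro ⟨⟨rfl, hb⟩, hlt⟩; exact ⟨b, ⟨hb, hlt⟩, rfl, rfl⟩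
    · rintro ⟨k, ⟨hk, hlt⟩, rfl, rfl⟩; exact ⟨⟨rfl, hk⟩, hlt⟩
  rw [this, Finset.card_image_of_injective _ (fun x y hxy => congrArg Prod.snd hxy)]

lemma product_singleton_filter_card (j : Fin n') (u : Finset (Fin n')) :
    ((u ×ˢ {j}).filter fun q => q.2 < q.1).card = (u.filter fun i => j < i).card := by
  have : ((u ×ˢ {j}).filter fun q => q.2 < q.1)
      = (u.filter fun i => j < i).image fun i => (i, j) := by
    ext ⟨a, b⟩
    simp only [Finset.mem_filter, Finset.mem_product, Finset.mem_singleton,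
      Finset.mem_image, Prod.mk.injEq]
    constructor
    · rintro ⟨⟨ha, rfl⟩, hlt⟩; exact ⟨a, ⟨ha, hlt⟩, rfl, rfl⟩
    · rintro ⟨k, ⟨hk, hlt⟩, rfl, rfl⟩; exact ⟨⟨hk, rfl⟩, hlt⟩
  rw [this, Finset.card_image_of_injective _ (fun x y hxy => congrArg Prod.fst hxy)]

lemma mulSign_erase_left {u : Finset (Fin n')} {j : Fin n'} (hj : j ∈ u)
    (v : Finset (Fin n')) :
    mulSign F u v = (-1 : F) ^ ((v.filter fun k => k < j).card) * mulSign F (u.erase j) v := by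
  conv_lhs => rw [← Finset.insert_erase hj]
  rw [Finset.insert_eq]
  rw [mulSign_union_left (Finset.disjoint_singleton_left.2 (Finset.notMem_erase j u))]
  congr 1
  unfold mulSign
  rw [singleton_product_filter_card]

lemma mulSign_erase_right {v : Finset (Fin n')} {j : Fin n'} (hj : j ∈ v)
    (u : Finset (Fin n')) :
    mulSign F u v = (-1 : F) ^ ((u.filter fun i => j < i).card) * mulSign F u (v.erase j) := by
  conv_lhs => rw [← Finset.insert_erase hj]
  rw [Finset.insert_eq]
  rw [mulSign_union_right (Finset.disjoint_singleton_left.2 (Finset.notMem_erase j v))]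
  congr 1
  unfold mulSign
  congr 1
  exact product_singleton_filter_card j u

lemma filter_union_card {u v : Finset (Fin n')} (h : Disjoint u v) (p : Fin n' → Prop)
    [DecidablePred p] :
    ((u ∪ v).filter p).card = (u.filter p).card + (v.filter p).card := by
  rw [Finset.filter_union, Finset.card_union_of_disjoint
    (Finset.disjoint_filter_filter h)]

lemma filter_lt_card_erase {u : Finset (Fin n')} {j : Fin n'} (hj : j ∈ u) (k : Fin n') :
    (u.filter fun x => x < k).card
      = ((u.erase j).filter fun x => x < k).card + (if j < k then 1 else 0) := by
  conv_lhs => rw [← Finset.insert_erase hj]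
  rw [Finset.filter_insert]
  split
  · rw [Finset.card_insert_of_notMem fun hmem =>
      Finset.notMem_erase j u (Finset.mem_filter.1 hmem).1]
  · rw [add_zero]

lemma filter_lt_gt_card {u : Finset (Fin n')} {j : Fin n'} (hj : j ∉ u) :
    (u.filter fun x => x < j).card + (u.filter fun x => j < x).card = u.card := by
  have hiff : ∀ x ∈ u, (¬ x < j) ↔ j < x := by
    intro x hx
    have hne : x ≠ j := fun e => hj (e ▸ hx)
    constructor
    · intro hnlt; exact lt_of_le_of_ne (not_lt.1 hnlt) (Ne.symm hne)
    · intro hlt hlt'; exact absurd (lt_trans hlt hlt') (lt_irrefl _)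
  rw [← Finset.filter_congr hiff, Finset.card_filter_add_card_filter_not]
/-! ### Homogeneity -/

lemma IsHomog.add {c : ZMod 2} {f g : SAlg F n n'} (hf : IsHomog c f) (hg : IsHomog c g) :
    IsHomog c (f + g) := by
  intro q hq
  rcases Finset.mem_union.1 (Finsupp.support_add hq) with h | h
  exacts [hf q h, hg q h]

lemma IsHomog.smul {c : ZMod 2} {d : F} {f : SAlg F n n'} (hf : IsHomog c f) :
    IsHomog c (d • f) := fun q hq => hf q (Finsupp.support_smul hq)

lemma IsHomog.zero {c : ZMod 2} : IsHomog c (0 : SAlg F n n') := fun q hq => by simp at hq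

lemma IsHomog.sum {κ : Type*} {c : ZMod 2} {s : Finset κ} {f : κ → SAlg F n n'}
    (hf : ∀ j ∈ s, IsHomog c (f j)) : IsHomog c (∑ j ∈ s, f j) := by
  classical
  induction s using Finset.induction_on with
  | empty => simpa using IsHomog.zero
  | @insert a s ha ih =>
      rw [Finset.sum_insert ha]
      exact (hf a (Finset.mem_insert_self a s)).add
        (ih fun j hj => hf j (Finset.mem_insert_of_mem hj))

lemma IsHomog.single {c : ZMod 2} {q : SIdx n n'} {d : F} (h : (q.2.card : ZMod 2) = c) :
    IsHomog c (Finsupp.single q d) := by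
  intro r hr
  have := Finsupp.support_single_subset hr
  simp only [Finset.mem_singleton] at this
  subst this; exact h

lemma IsHomog.de {c : ZMod 2} {f : SAlg F n n'} (hf : IsHomog c f) (i : Fin n) :
    IsHomog c (De i f) := by
  intro r hr
  obtain ⟨q, hq, hr⟩ := Finset.mem_biUnion.1 (Finsupp.support_sum hr)
  by_cases h : 0 < q.1 i
  · rw [if_pos h] at hr
    have := Finsupp.support_single_subset hr
    simp only [Finset.mem_singleton] at this
    subst this
    exact hf q hq
  · rw [if_neg h] at hr; simp at hr

lemma IsHomog.do {c : ZMod 2} {f : SAlg F n n'} (hf : IsHomog c f) (j : Fin n') :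
    IsHomog (c + 1) (Do j f) := by
  intro r hr
  obtain ⟨q, hq, hr⟩ := Finset.mem_biUnion.1 (Finsupp.support_sum hr)
  by_cases h : j ∈ q.2
  · rw [if_pos h] at hr
    have hr' := Finsupp.support_single_subset (Finsupp.support_smul hr)
    simp only [Finset.mem_singleton] at hr'
    subst hr'
    have hcard : (q.2.erase j).card + 1 = q.2.card := Finset.card_erase_add_one h
    have : ((q.2.erase j).card : ZMod 2) + 1 = c := by
      rw [show ((q.2.erase j).card : ZMod 2) + 1 = (((q.2.erase j).card + 1 : ℕ) : ZMod 2) by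
        push_cast; ring, hcard]
      exact hf q hq
    have h2 : ((q.2.erase j).card : ZMod 2) = c + 1 := by
      rw [← this, add_assoc, show (1 + 1 : ZMod 2) = 0 by decide, add_zero]
    exact h2
  · rw [if_neg h] at hr; simp at hr

lemma IsHomog.sMul {cf cg : ZMod 2} {f g : SAlg F n n'} (hf : IsHomog cf f)
    (hg : IsHomog cg g) : IsHomog (cf + cg) (sMul f g) := by
  intro m hm
  obtain ⟨q, hq, hm⟩ := Finset.mem_biUnion.1 (Finsupp.support_sum hm)
  obtain ⟨r, hr, hm⟩ := Finset.mem_biUnion.1 (Finsupp.support_sum hm)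
  have hm' := Finsupp.support_smul hm
  unfold sMulB at hm'
  by_cases h : Disjoint q.2 r.2
  · rw [if_pos h] at hm'
    have := Finsupp.support_single_subset (Finsupp.support_smul hm')
    simp only [Finset.mem_singleton] at this
    subst this
    show (((q.2 ∪ r.2).card : ℕ) : ZMod 2) = cf + cg
    rw [Finset.card_union_of_disjoint h]
    push_cast
    rw [hf q hq, hg r hr]
  · rw [if_neg h] at hm'; simp at hm'

/-! ### Supercommutativity -/

lemma sMulB_comm (q r : SIdx n n') :
    (sMulB q r : SAlg F n n') = (-1 : F) ^ (q.2.card * r.2.card) • sMulB r q := by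
  unfold sMulB
  by_cases h : Disjoint q.2 r.2
  · rw [if_pos h, if_pos h.symm]
    have h1 : (Finsupp.single (fun i => r.1 i + q.1 i, r.2 ∪ q.2) (1 : F))
        = Finsupp.single (fun i => q.1 i + r.1 i, q.2 ∪ r.2) (1 : F) := by
      congr 1
      exact Prod.ext (funext fun i => add_comm _ _) (Finset.union_comm _ _)
    rw [h1, smul_smul]
    congr 1
    rw [mulSign_comm h]
    have h2 : ∏ i, ((q.1 i + r.1 i).choose (q.1 i) : F)
        = ∏ i, ((r.1 i + q.1 i).choose (r.1 i) : F) := by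
      refine Finset.prod_congr rfl fun i _ => ?_
      rw [add_comm (r.1 i), Nat.choose_symm_add]
    rw [h2]; ring
  · rw [if_neg h, if_neg (fun hd => h hd.symm), smul_zero]

lemma sMul_comm {pf pg : ZMod 2} {f g : SAlg F n n'} (hf : IsHomog pf f)
    (hg : IsHomog pg g) : sMul f g = sgn F (pf * pg) • sMul g f := by
  have heqf : f = ∑ q ∈ f.support, Finsupp.single q (f q) := (Finsupp.sum_single f).symm
  have heqg : g = ∑ r ∈ g.support, Finsupp.single r (g r) := (Finsupp.sum_single g).symm
  have L : sMul f g = ∑ q ∈ f.support, ∑ r ∈ g.support,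
      sMul (Finsupp.single q (f q)) (Finsupp.single r (g r)) := by
    conv_lhs => rw [heqf, heqg]
    rw [sum_sMul]
    exact Finset.sum_congr rfl fun q _ => sMul_sum _ _ _
  have R : sMul g f = ∑ r ∈ g.support, ∑ q ∈ f.support,
      sMul (Finsupp.single r (g r)) (Finsupp.single q (f q)) := by
    conv_lhs => rw [heqg, heqf]
    rw [sum_sMul]
    exact Finset.sum_congr rfl fun r _ => sMul_sum _ _ _
  rw [L, R, Finset.sum_comm, Finset.smul_sum]
  refine Finset.sum_congr rfl fun q hq => ?_
  rw [Finset.smul_sum]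
  refine Finset.sum_congr rfl fun r hr => ?_
  rw [sMul_single_single, sMul_single_single, sMulB_comm, smul_smul, smul_smul]
  congr 1
  have : sgn F (pf * pg) = (-1 : F) ^ (r.2.card * q.2.card) := by
    rw [← hf r hr, ← hg q hq, show ((r.2.card : ZMod 2) * (q.2.card : ZMod 2))
      = ((r.2.card * q.2.card : ℕ) : ZMod 2) by push_cast; ring, sgn_natCast]
  rw [this]; ring
/-! ### Associativity -/

lemma choose_chain (a b c : ℕ) :
    (a + b).choose a * ((a + b) + c).choose (a + b)
      = (b + c).choose b * (a + (b + c)).choose a := by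
  have h := Nat.choose_mul (n := a + b + c)
    (Nat.le_add_right a b)
  rw [show a + b + c - a = b + c from by omega, show a + b - a = b from by omega] at h
  rw [← add_assoc]
  calc (a + b).choose a * (a + b + c).choose (a + b)
      = (a + b + c).choose (a + b) * (a + b).choose a := mul_comm _ _
    _ = (a + b + c).choose a * (b + c).choose b := h
    _ = (b + c).choose b * (a + b + c).choose a := mul_comm _ _

lemma sMulB_assoc (q r s : SIdx n n') :
    sMul (sMulB q r) (Finsupp.single s (1 : F))
      = sMul (Finsupp.single q (1 : F)) (sMulB r s) := by
  obtain ⟨α, u⟩ := q; obtain ⟨β, v⟩ := r; obtain ⟨γ, w⟩ := s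
  by_cases huv : Disjoint u v
  · by_cases hvw : Disjoint v w
    · rw [show (sMulB (α, u) (β, v) : SAlg F n n') = _ from if_pos huv,
        show (sMulB (β, v) (γ, w) : SAlg F n n') = _ from if_pos hvw,
        smul_sMul, sMul_smul, sMul_single_single, sMul_single_single, one_mul, one_smul,
        one_smul]
      by_cases d1 : Disjoint (u ∪ v) w
      · have hd := Finset.disjoint_union_left.1 d1
        have d2 : Disjoint u (v ∪ w) := Finset.disjoint_union_right.2 ⟨huv, hd.1⟩
        rw [show (sMulB ((fun i => α i + β i, u ∪ v) : SIdx n n') (γ, w) : SAlg F n n')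
            = _ from if_pos d1,
          show (sMulB ((α, u) : SIdx n n') (fun i => β i + γ i, v ∪ w) : SAlg F n n')
            = _ from if_pos d2]
        rw [smul_smul, smul_smul]
        have hsingle : Finsupp.single ((fun i => (α i + β i) + γ i, (u ∪ v) ∪ w) : SIdx n n') (1 : F)
            = Finsupp.single (fun i => α i + (β i + γ i), u ∪ (v ∪ w)) (1 : F) := by
          congr 1
          exact Prod.ext (funext fun i => add_assoc _ _ _) (Finset.union_assoc _ _ _)
        rw [hsingle]
        congr 1
        rw [mulSign_union_left huv, mulSign_union_right hvw]
        dsimp only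
        have hprod : (∏ i, ((α i + β i).choose (α i) : F))
              * ∏ i, (((α i + β i) + γ i).choose (α i + β i) : F)
            = (∏ i, ((β i + γ i).choose (β i) : F))
              * ∏ i, ((α i + (β i + γ i)).choose (α i) : F) := by
          rw [← Finset.prod_mul_distrib, ← Finset.prod_mul_distrib]
          refine Finset.prod_congr rfl fun i _ => ?_
          rw [← Nat.cast_mul, ← Nat.cast_mul, choose_chain]
        linear_combination (mulSign F u v * mulSign F u w * mulSign F v w) * hprod
      · have d2 : ¬ Disjoint u (v ∪ w) := by
          intro hc
          exact d1 (Finset.disjoint_union_left.2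
            ⟨(Finset.disjoint_union_right.1 hc).2, hvw⟩) |>.elim
        rw [show (sMulB ((fun i => α i + β i, u ∪ v) : SIdx n n') (γ, w) : SAlg F n n')
            = 0 from if_neg d1,
          show (sMulB ((α, u) : SIdx n n') (fun i => β i + γ i, v ∪ w) : SAlg F n n')
            = 0 from if_neg d2]
        rw [smul_zero, smul_zero]
    · rw [show (sMulB (β, v) (γ, w) : SAlg F n n') = 0 from if_neg hvw, sMul_zero]
      rw [show (sMulB (α, u) (β, v) : SAlg F n n') = _ from if_pos huv, smul_sMul,
        sMul_single_single, one_mul, one_smul]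
      have d1 : ¬ Disjoint (u ∪ v) w := fun hc =>
        hvw (Finset.disjoint_union_left.1 hc).2
      rw [show (sMulB ((fun i => α i + β i, u ∪ v) : SIdx n n') (γ, w) : SAlg F n n')
          = 0 from if_neg d1, smul_zero]
  · rw [show (sMulB (α, u) (β, v) : SAlg F n n') = 0 from if_neg huv, zero_sMul]
    by_cases hvw : Disjoint v w
    · rw [show (sMulB (β, v) (γ, w) : SAlg F n n') = _ from if_pos hvw, sMul_smul,
        sMul_single_single, one_mul, one_smul]
      have d2 : ¬ Disjoint u (v ∪ w) := fun hc =>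
        huv (Finset.disjoint_union_right.1 hc).1
      rw [show (sMulB ((α, u) : SIdx n n') (fun i => β i + γ i, v ∪ w) : SAlg F n n')
          = 0 from if_neg d2, smul_zero]
    · rw [show (sMulB (β, v) (γ, w) : SAlg F n n') = 0 from if_neg hvw, sMul_zero]

lemma sMul_assoc (f g h : SAlg F n n') : sMul (sMul f g) h = sMul f (sMul g h) := by
  induction f using Finsupp.induction_linear with
  | zero => simp
  | add f1 f2 h1 h2 => rw [add_sMul, add_sMul, add_sMul, h1, h2]
  | single q c =>
    induction g using Finsupp.induction_linear with
    | zero => simp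
    | add g1 g2 h1 h2 => rw [sMul_add, add_sMul, h1, h2, add_sMul, sMul_add]
    | single r d =>
      induction h using Finsupp.induction_linear with
      | zero => simp
      | add k1 k2 h1 h2 => rw [sMul_add, sMul_add, sMul_add, h1, h2]
      | single s e =>
        rw [sMul_single_single, sMul_single_single, smul_sMul, sMul_smul]
        rw [show Finsupp.single q c = c • Finsupp.single q (1 : F) by
            rw [Finsupp.smul_single, smul_eq_mul, mul_one],
          show Finsupp.single s e = e • Finsupp.single s (1 : F) by
            rw [Finsupp.smul_single, smul_eq_mul, mul_one]]
        rw [smul_sMul, sMul_smul, sMulB_assoc]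
        simp only [smul_smul]
        congr 1
        ring
/-! ### Leibniz rules -/

lemma single_smul_one (q : SIdx n n') (c : F) :
    Finsupp.single q c = c • Finsupp.single q (1 : F) := by
  rw [Finsupp.smul_single, smul_eq_mul, mul_one]

lemma neg_one_pow_mul_self (m : ℕ) : (-1 : F) ^ m * (-1 : F) ^ m = 1 := by
  rw [← pow_add]; exact Even.neg_one_pow ⟨m, rfl⟩

lemma filter_lt_self_erase (u : Finset (Fin n')) (j : Fin n') :
    ((u.erase j).filter fun x => x < j) = u.filter fun x => x < j := by
  rw [Finset.filter_erase]
  apply Finset.erase_eq_of_notMem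
  intro hmem
  exact absurd (Finset.mem_filter.1 hmem).2 (lt_irrefl j)

lemma pascal' {a b : ℕ} (ha : 0 < a) (hb : 0 < b) :
    (a + b).choose a = ((a - 1) + b).choose (a - 1) + (a + (b - 1)).choose a := by
  obtain ⟨a', rfl⟩ : ∃ a', a = a' + 1 := ⟨a - 1, by omega⟩
  obtain ⟨b', rfl⟩ : ∃ b', b = b' + 1 := ⟨b - 1, by omega⟩
  simp only [Nat.add_sub_cancel]
  rw [show a' + 1 + (b' + 1) = (a' + (b' + 1)) + 1 by omega, Nat.choose_succ_succ]
  congr 1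
  rw [show a' + (b' + 1) = a' + 1 + b' by omega]

lemma update_add_left {α β : Fin n → ℕ} {i : Fin n} (h : 0 < α i) :
    (fun k => Function.update α i (α i - 1) k + β k)
      = Function.update (fun k => α k + β k) i (α i + β i - 1) := by
  funext k
  rcases eq_or_ne k i with rfl | hk
  · simp only [Function.update_self]; omega
  · simp only [Function.update_of_ne hk]

lemma update_add_right {α β : Fin n → ℕ} {i : Fin n} (h : 0 < β i) :
    (fun k => α k + Function.update β i (β i - 1) k)
      = Function.update (fun k => α k + β k) i (α i + β i - 1) := by
  funext k
  rcases eq_or_ne k i with rfl | hk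
  · simp only [Function.update_self]; omega
  · simp only [Function.update_of_ne hk]

lemma prod_choose_pascal (α β : Fin n → ℕ) (i : Fin n) (hα : 0 < α i) (hβ : 0 < β i) :
    (∏ k, ((α k + β k).choose (α k) : F))
      = (∏ k, ((Function.update α i (α i - 1) k + β k).choose
          (Function.update α i (α i - 1) k) : F))
        + ∏ k, ((α k + Function.update β i (β i - 1) k).choose (α k) : F) := by
  rw [← Finset.mul_prod_erase _ _ (Finset.mem_univ i),
    ← Finset.mul_prod_erase _ (fun k => ((Function.update α i (α i - 1) k + β k).choose
      (Function.update α i (α i - 1) k) : F)) (Finset.mem_univ i),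
    ← Finset.mul_prod_erase _ (fun k => ((α k + Function.update β i (β i - 1) k).choose
      (α k) : F)) (Finset.mem_univ i)]
  have h1 : (∏ k ∈ Finset.univ.erase i, ((Function.update α i (α i - 1) k + β k).choose
      (Function.update α i (α i - 1) k) : F)) = ∏ k ∈ Finset.univ.erase i,
      ((α k + β k).choose (α k) : F) :=
    Finset.prod_congr rfl fun k hk => by
      rw [Function.update_of_ne (Finset.mem_erase.1 hk).1]
  have h2 : (∏ k ∈ Finset.univ.erase i, ((α k + Function.update β i (β i - 1) k).choose
      (α k) : F)) = ∏ k ∈ Finset.univ.erase i, ((α k + β k).choose (α k) : F) :=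
    Finset.prod_congr rfl fun k hk => by
      rw [Function.update_of_ne (Finset.mem_erase.1 hk).1]
  rw [h1, h2, Function.update_self, Function.update_self, ← add_mul]
  congr 1
  rw [pascal' hα hβ, Nat.cast_add]

lemma De_sMulB (i : Fin n) (q r : SIdx n n') :
    De i (sMulB q r : SAlg F n n') =
      sMul (De i (Finsupp.single q (1 : F))) (Finsupp.single r (1 : F))
        + sMul (Finsupp.single q (1 : F)) (De i (Finsupp.single r (1 : F))) := by
  obtain ⟨α, u⟩ := q; obtain ⟨β, v⟩ := r
  rw [De_single, De_single]
  dsimp only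
  by_cases h : Disjoint u v
  · rw [show (sMulB (α, u) (β, v) : SAlg F n n') = _ from if_pos h, De_smul, De_single]
    dsimp only
    by_cases hα : 0 < α i <;> by_cases hβ : 0 < β i
    · rw [if_pos (show 0 < α i + β i by omega), if_pos hα, if_pos hβ,
        sMul_single_single, sMul_single_single, one_mul, one_smul, one_smul,
        show (sMulB ((Function.update α i (α i - 1), u) : SIdx n n') (β, v) : SAlg F n n')
          = _ from if_pos h,
        show (sMulB ((α, u) : SIdx n n') (Function.update β i (β i - 1), v) : SAlg F n n')
          = _ from if_pos h]
      dsimp only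
      rw [show (Finsupp.single ((fun k => Function.update α i (α i - 1) k + β k, u ∪ v)
            : SIdx n n') (1 : F))
          = Finsupp.single (Function.update (fun k => α k + β k) i (α i + β i - 1), u ∪ v)
            (1 : F) by rw [update_add_left hα],
        show (Finsupp.single ((fun k => α k + Function.update β i (β i - 1) k, u ∪ v)
            : SIdx n n') (1 : F))
          = Finsupp.single (Function.update (fun k => α k + β k) i (α i + β i - 1), u ∪ v)
            (1 : F) by rw [update_add_right hβ]]
      rw [← add_smul]
      congr 1
      rw [prod_choose_pascal α β i hα hβ]
      ring
    · have hβ0 : β i = 0 := by omega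
      rw [if_pos (show 0 < α i + β i by omega), if_pos hα, if_neg hβ, sMul_zero, add_zero,
        sMul_single_single, one_mul, one_smul,
        show (sMulB ((Function.update α i (α i - 1), u) : SIdx n n') (β, v) : SAlg F n n')
          = _ from if_pos h]
      dsimp only
      rw [show (Finsupp.single ((fun k => Function.update α i (α i - 1) k + β k, u ∪ v)
            : SIdx n n') (1 : F))
          = Finsupp.single (Function.update (fun k => α k + β k) i (α i + β i - 1), u ∪ v)
            (1 : F) by rw [update_add_left hα]]
      congr 2
      refine Finset.prod_congr rfl fun k _ => ?_
      rcases eq_or_ne k i with rfl | hk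
      · rw [Function.update_self, hβ0, add_zero, add_zero, Nat.choose_self, Nat.choose_self]
      · rw [Function.update_of_ne hk]
    · have hα0 : α i = 0 := by omega
      rw [if_pos (show 0 < α i + β i by omega), if_neg hα, if_pos hβ, zero_sMul, zero_add,
        sMul_single_single, one_mul, one_smul,
        show (sMulB ((α, u) : SIdx n n') (Function.update β i (β i - 1), v) : SAlg F n n')
          = _ from if_pos h]
      dsimp only
      rw [show (Finsupp.single ((fun k => α k + Function.update β i (β i - 1) k, u ∪ v)
            : SIdx n n') (1 : F))
          = Finsupp.single (Function.update (fun k => α k + β k) i (α i + β i - 1), u ∪ v)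
            (1 : F) by rw [update_add_right hβ]]
      congr 2
      refine Finset.prod_congr rfl fun k _ => ?_
      rcases eq_or_ne k i with rfl | hk
      · rw [Function.update_self, hα0, zero_add, zero_add, Nat.choose_zero_right,
          Nat.choose_zero_right]
      · rw [Function.update_of_ne hk]
    · rw [if_neg (show ¬ 0 < α i + β i by omega), if_neg hα, if_neg hβ, zero_sMul,
        sMul_zero, add_zero, smul_zero]
  · have hz : ∀ (x y : Fin n → ℕ), (sMulB (x, u) (y, v) : SAlg F n n') = 0 :=
      fun x y => if_neg h
    rw [hz, De_zero]
    by_cases hα : 0 < α i <;> by_cases hβ : 0 < β i <;>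
      simp [hα, hβ, sMul_single_single, hz]

lemma De_sMul (i : Fin n) (f g : SAlg F n n') :
    De i (sMul f g) = sMul (De i f) g + sMul f (De i g) := by
  induction f using Finsupp.induction_linear with
  | zero => simp
  | add f1 f2 h1 h2 =>
      rw [add_sMul, De_add, h1, h2, De_add, add_sMul, add_sMul]
      abel
  | single q c =>
    induction g using Finsupp.induction_linear with
    | zero => simp
    | add g1 g2 h1 h2 =>
        rw [sMul_add, De_add, h1, h2, De_add, sMul_add, sMul_add]
        abel
    | single r d =>
        rw [sMul_single_single, De_smul, De_sMulB]
        conv_rhs => rw [single_smul_one q c, single_smul_one r d]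
        rw [De_smul, De_smul, smul_sMul, sMul_smul, smul_sMul, sMul_smul]
        simp only [smul_smul, smul_add]
lemma Do_sMulB (j : Fin n') (q r : SIdx n n') :
    Do j (sMulB q r : SAlg F n n') =
      sMul (Do j (Finsupp.single q (1 : F))) (Finsupp.single r (1 : F))
        + (-1 : F) ^ q.2.card •
          sMul (Finsupp.single q (1 : F)) (Do j (Finsupp.single r (1 : F))) := by
  obtain ⟨α, u⟩ := q; obtain ⟨β, v⟩ := r
  rw [Do_single, Do_single]
  dsimp only
  by_cases h : Disjoint u v
  · rw [show (sMulB (α, u) (β, v) : SAlg F n n') = _ from if_pos h, Do_smul, Do_single]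
    dsimp only
    by_cases hju : j ∈ u
    · have hjv : j ∉ v := Finset.disjoint_left.1 h hju
      have hjuv : j ∈ u ∪ v := Finset.mem_union_left _ hju
      rw [if_pos hjuv, if_pos hju, if_neg hjv, sMul_zero, smul_zero, add_zero, mul_one,
        mul_one, smul_sMul, sMul_single_single, one_mul, one_smul,
        show (sMulB ((α, u.erase j) : SIdx n n') (β, v) : SAlg F n n')
          = _ from if_pos (h.mono_left (Finset.erase_subset _ _))]
      dsimp only
      rw [Finset.erase_union_distrib, Finset.erase_eq_of_notMem hjv]
      simp only [smul_smul]
      congr 1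
      rw [mulSign_erase_left hju v, filter_union_card h, pow_add]
      linear_combination (mulSign F (u.erase j) v
          * (∏ i, ((α i + β i).choose (α i) : F))
          * (-1 : F) ^ ((u.filter fun x => x < j).card))
        * neg_one_pow_mul_self (F := F) ((v.filter fun x => x < j).card)
    · by_cases hjv : j ∈ v
      · have hjuv : j ∈ u ∪ v := Finset.mem_union_right _ hjv
        rw [if_pos hjuv, if_neg hju, if_pos hjv, zero_sMul, zero_add, mul_one, mul_one,
          sMul_smul, sMul_single_single, one_mul, one_smul,
          show (sMulB ((α, u) : SIdx n n') (β, v.erase j) : SAlg F n n')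
            = _ from if_pos (h.mono_right (Finset.erase_subset _ _))]
        dsimp only
        rw [Finset.erase_union_distrib, Finset.erase_eq_of_notMem hju]
        simp only [smul_smul]
        congr 1
        rw [mulSign_erase_right hjv u, filter_union_card h, pow_add,
          ← filter_lt_gt_card hju, pow_add]
        ring
      · have hjuv : j ∉ u ∪ v := fun hc => (Finset.mem_union.1 hc).elim hju hjv
        rw [if_neg hjuv, if_neg hju, if_neg hjv, smul_zero, zero_sMul, sMul_zero,
          smul_zero, add_zero]
  · rw [show (sMulB (α, u) (β, v) : SAlg F n n') = 0 from if_neg h, Do_zero]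
    obtain ⟨k0, hk0u, hk0v⟩ := Finset.not_disjoint_iff.1 h
    by_cases hju : j ∈ u
    · by_cases hjv : j ∈ v
      · by_cases hsub : Disjoint (u.erase j) v
        · have hsub2 : Disjoint u (v.erase j) := by
            rw [Finset.disjoint_left]
            intro k hk hk'
            rcases eq_or_ne k j with hkj | hne
            · rw [hkj] at hk'
              exact (Finset.notMem_erase j v) hk'
            · exact Finset.disjoint_left.1 hsub (Finset.mem_erase.2 ⟨hne, hk⟩)
                (Finset.mem_of_mem_erase hk')
          rw [if_pos hju, if_pos hjv, mul_one, mul_one, smul_sMul, sMul_smul,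
            sMul_single_single, sMul_single_single, one_mul, one_smul, one_smul,
            show (sMulB ((α, u.erase j) : SIdx n n') (β, v) : SAlg F n n')
              = _ from if_pos hsub,
            show (sMulB ((α, u) : SIdx n n') (β, v.erase j) : SAlg F n n')
              = _ from if_pos hsub2]
          dsimp only
          have e1 : u.erase j ∪ v = u ∪ v := by
            ext k
            simp only [Finset.mem_union, Finset.mem_erase]
            constructor
            · rintro (⟨-, hk⟩ | hk)
              exacts [Or.inl hk, Or.inr hk]
            · rintro (hk | hk)
              · rcases eq_or_ne k j with rfl | hne
                exacts [Or.inr hjv, Or.inl ⟨hne, hk⟩]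
              · exact Or.inr hk
          have e2 : u ∪ v.erase j = u ∪ v := by
            ext k
            simp only [Finset.mem_union, Finset.mem_erase]
            constructor
            · rintro (hk | ⟨-, hk⟩)
              exacts [Or.inl hk, Or.inr hk]
            · rintro (hk | hk)
              · exact Or.inl hk
              · rcases eq_or_ne k j with rfl | hne
                exacts [Or.inl hju, Or.inr ⟨hne, hk⟩]
          rw [e1, e2]
          simp only [smul_smul]
          symm
          rw [← add_smul]
          apply smul_eq_zero_of_left
          rw [mulSign_erase_right hjv (u.erase j), mulSign_erase_left hju (v.erase j),
            filter_lt_self_erase v j, ← filter_lt_self_erase u j,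
            ← Finset.card_erase_add_one hju, ← filter_lt_gt_card (Finset.notMem_erase j u),
            pow_add, pow_succ]
          linear_combination (-((-1 : F) ^ (((u.erase j).filter fun x => x < j).card)
              * (-1 : F) ^ (((u.erase j).filter fun i => j < i).card)
              * mulSign F (u.erase j) (v.erase j)
              * (∏ i, ((α i + β i).choose (α i) : F))))
            * neg_one_pow_mul_self (F := F) ((v.filter fun k => k < j).card)
        · have hsub2 : ¬ Disjoint u (v.erase j) := by
            obtain ⟨k, hk1, hk2⟩ := Finset.not_disjoint_iff.1 hsub
            exact Finset.not_disjoint_iff.2 ⟨k, Finset.mem_of_mem_erase hk1,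
              Finset.mem_erase.2 ⟨(Finset.mem_erase.1 hk1).1, hk2⟩⟩
          simp [hju, hjv, smul_sMul, sMul_smul, sMul_single_single,
            show (sMulB ((α, u.erase j) : SIdx n n') (β, v) : SAlg F n n') = 0 from
              if_neg hsub,
            show (sMulB ((α, u) : SIdx n n') (β, v.erase j) : SAlg F n n') = 0 from
              if_neg hsub2]
      · have hnd : ¬ Disjoint (u.erase j) v := Finset.not_disjoint_iff.2
          ⟨k0, Finset.mem_erase.2 ⟨fun e => hjv (e ▸ hk0v), hk0u⟩, hk0v⟩
        simp [hju, hjv, smul_sMul, sMul_single_single,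
          show (sMulB ((α, u.erase j) : SIdx n n') (β, v) : SAlg F n n') = 0 from
            if_neg hnd]
    · by_cases hjv : j ∈ v
      · have hnd : ¬ Disjoint u (v.erase j) := Finset.not_disjoint_iff.2
          ⟨k0, hk0u, Finset.mem_erase.2 ⟨fun e => hju (e ▸ hk0u), hk0v⟩⟩
        simp [hju, hjv, sMul_smul, sMul_single_single,
          show (sMulB ((α, u) : SIdx n n') (β, v.erase j) : SAlg F n n') = 0 from
            if_neg hnd]
      · simp [hju, hjv]

lemma Do_sMul (j : Fin n') {pf : ZMod 2} {f : SAlg F n n'} (hf : IsHomog pf f)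
    (g : SAlg F n n') :
    Do j (sMul f g) = sMul (Do j f) g + sgn F pf • sMul f (Do j g) := by
  have heqf : f = ∑ q ∈ f.support, Finsupp.single q (f q) := (Finsupp.sum_single f).symm
  rw [heqf]
  simp only [sum_sMul, Do_sum, Finset.smul_sum]
  rw [← Finset.sum_add_distrib]
  refine Finset.sum_congr rfl fun q hq => ?_
  have hcard : ((q.2.card : ZMod 2)) = pf := hf q hq
  induction g using Finsupp.induction_linear with
  | zero => simp
  | add g1 g2 h1 h2 =>
      rw [sMul_add, Do_add, h1, h2, Do_add, sMul_add, sMul_add, smul_add]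
      abel
  | single r d =>
      rw [sMul_single_single, Do_smul, Do_sMulB]
      conv_rhs => rw [single_smul_one q (f q), single_smul_one r d]
      rw [Do_smul, Do_smul, smul_sMul, sMul_smul, smul_sMul, sMul_smul]
      simp only [smul_smul, smul_add]
      congr 2
      rw [← hcard, sgn_natCast]
      ring
/-! ### Commutation of derivatives -/

lemma erase_erase_comm (s : Finset (Fin n')) (a b : Fin n') :
    (s.erase a).erase b = (s.erase b).erase a := by
  ext x
  simp only [Finset.mem_erase]
  tauto

lemma De_De (i i' : Fin n) (f : SAlg F n n') : De i (De i' f) = De i' (De i f) := by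
  rcases eq_or_ne i i' with rfl | hne
  · rfl
  · induction f using Finsupp.induction_linear with
    | zero => simp
    | add f g h1 h2 => rw [De_add, De_add, h1, h2, De_add, De_add]
    | single q c =>
        obtain ⟨α, u⟩ := q
        rw [De_single, De_single]
        dsimp only
        by_cases h1 : 0 < α i' <;> by_cases h2 : 0 < α i
        · rw [if_pos h1, if_pos h2, De_single, De_single]
          dsimp only
          simp only [Function.update_of_ne hne, Function.update_of_ne hne.symm]
          rw [if_pos h2,
            if_pos h1, Function.update_comm hne.symm]
        · rw [if_pos h1, if_neg h2, De_zero, De_single]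
          dsimp only
          simp only [Function.update_of_ne hne]
          rw [if_neg h2]
        · rw [if_neg h1, if_pos h2, De_zero, De_single]
          dsimp only
          simp only [Function.update_of_ne hne.symm]
          rw [if_neg h1]
        · rw [if_neg h1, if_neg h2, De_zero, De_zero]

lemma De_Do (i : Fin n) (j : Fin n') (f : SAlg F n n') : De i (Do j f) = Do j (De i f) := by
  induction f using Finsupp.induction_linear with
  | zero => simp
  | add f g h1 h2 => simp only [De_add, Do_add, h1, h2]
  | single q c =>
      obtain ⟨α, u⟩ := q
      rw [Do_single, De_single]
      dsimp only
      by_cases hj : j ∈ u <;> by_cases hi : 0 < α i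
      · rw [if_pos hj, if_pos hi, De_smul, De_single, Do_single]
        dsimp only
        rw [if_pos hi, if_pos hj]
      · rw [if_pos hj, if_neg hi, De_smul, De_single]
        dsimp only
        rw [if_neg hi, Do_zero, smul_zero]
      · rw [if_neg hj, if_pos hi, De_zero, Do_single]
        dsimp only
        rw [if_neg hj]
      · rw [if_neg hj, if_neg hi, De_zero, Do_zero]

lemma Do_Do_self (j : Fin n') (f : SAlg F n n') : Do j (Do j f) = 0 := by
  induction f using Finsupp.induction_linear with
  | zero => simp
  | add f g h1 h2 => simp only [Do_add, h1, h2, add_zero]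
  | single q c =>
      obtain ⟨α, u⟩ := q
      rw [Do_single]
      dsimp only
      by_cases hj : j ∈ u
      · rw [if_pos hj, Do_smul, Do_single]
        dsimp only
        rw [if_neg (Finset.notMem_erase j u), smul_zero]
      · rw [if_neg hj, Do_zero]

lemma Do_Do (j j' : Fin n') (f : SAlg F n n') : Do j (Do j' f) = - Do j' (Do j f) := by
  rcases eq_or_ne j j' with rfl | hne
  · rw [Do_Do_self, neg_zero]
  · induction f using Finsupp.induction_linear with
    | zero => simp
    | add f g h1 h2 => rw [Do_add, Do_add, h1, h2, Do_add, Do_add, neg_add]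
    | single q c =>
        obtain ⟨α, u⟩ := q
        rw [Do_single, Do_single]
        dsimp only
        by_cases h1 : j' ∈ u <;> by_cases h2 : j ∈ u
        · have h2' : j ∈ u.erase j' := Finset.mem_erase.2 ⟨hne, h2⟩
          have h1' : j' ∈ u.erase j := Finset.mem_erase.2 ⟨hne.symm, h1⟩
          rw [if_pos h1, if_pos h2, Do_smul, Do_smul, Do_single, Do_single]
          dsimp only
          rw [if_pos h2', if_pos h1']
          simp only [mul_one]
          rw [smul_smul, smul_smul, erase_erase_comm, ← neg_smul]
          congr 1
          rw [filter_lt_card_erase h2 j', filter_lt_card_erase h1 j]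
          rcases lt_or_gt_of_ne hne with hlt | hlt
          · rw [if_pos hlt, if_neg (not_lt.2 hlt.le), pow_add, pow_add, pow_succ, pow_zero]
            ring
          · rw [if_neg (not_lt.2 hlt.le), if_pos hlt, pow_add, pow_add, pow_succ, pow_zero]
            ring
        · have h2' : j ∉ u.erase j' := fun hc => h2 (Finset.mem_of_mem_erase hc)
          rw [if_pos h1, if_neg h2, Do_smul, Do_single, Do_zero]
          dsimp only
          rw [if_neg h2', smul_zero, neg_zero]
        · have h1' : j' ∉ u.erase j := fun hc => h1 (Finset.mem_of_mem_erase hc)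
          rw [if_neg h1, if_pos h2, Do_smul, Do_single, Do_zero]
          dsimp only
          rw [if_neg h1', smul_zero, neg_zero]
        · rw [if_neg h1, if_neg h2, Do_zero, Do_zero, neg_zero]
/-! ### Unified derivative -/

variable {n : ℕ}

def Dd (k : Bool × Fin n) (f : SAlg F n n) : SAlg F n n :=
  if k.1 then Do k.2 f else De k.2 f

def par (k : Bool × Fin n) : ZMod 2 := if k.1 then 1 else 0

def conj' (k : Bool × Fin n) : Bool × Fin n := (!k.1, k.2)

lemma conj_conj (k : Bool × Fin n) : conj' (conj' k) = k := by
  rcases k with ⟨b, i⟩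
  cases b <;> rfl

lemma par_conj (k : Bool × Fin n) : par (conj' k) = par k + 1 := by
  rcases k with ⟨b, i⟩
  cases b <;> simp [par, conj'] <;> decide

lemma Dd_add (k : Bool × Fin n) (f g : SAlg F n n) : Dd k (f + g) = Dd k f + Dd k g := by
  rcases k with ⟨b, i⟩; cases b <;> simp [Dd, De_add, Do_add]

lemma Dd_smul (k : Bool × Fin n) (c : F) (f : SAlg F n n) : Dd k (c • f) = c • Dd k f := by
  rcases k with ⟨b, i⟩; cases b <;> simp [Dd, De_smul, Do_smul]

@[simp] lemma Dd_zero (k : Bool × Fin n) : Dd k (0 : SAlg F n n) = 0 := by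
  rcases k with ⟨b, i⟩; cases b <;> simp [Dd]

lemma Dd_sum {κ : Type*} (k : Bool × Fin n) (s : Finset κ) (f : κ → SAlg F n n) :
    Dd k (∑ j ∈ s, f j) = ∑ j ∈ s, Dd k (f j) := by
  rcases k with ⟨b, i⟩; cases b <;> simp [Dd, De_sum, Do_sum]

lemma Dd_homog {pf : ZMod 2} (k : Bool × Fin n) {f : SAlg F n n} (hf : IsHomog pf f) :
    IsHomog (pf + par k) (Dd k f) := by
  rcases k with ⟨b, i⟩
  cases b
  · simpa [Dd, par] using hf.de i
  · simpa [Dd, par] using hf.do i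

lemma Dd_sMul {pf : ZMod 2} (k : Bool × Fin n) {f : SAlg F n n} (hf : IsHomog pf f)
    (g : SAlg F n n) :
    Dd k (sMul f g) = sMul (Dd k f) g + sgn F (par k * pf) • sMul f (Dd k g) := by
  rcases k with ⟨b, i⟩
  cases b
  · simp [Dd, par, De_sMul]
  · simp only [Dd, par, if_true, ite_true, one_mul]
    exact Do_sMul i hf g

lemma Dd_Dd (k l : Bool × Fin n) (f : SAlg F n n) :
    Dd k (Dd l f) = sgn F (par k * par l) • Dd l (Dd k f) := by
  rcases k with ⟨a, i⟩; rcases l with ⟨b, i'⟩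
  cases a <;> cases b
  · simp [Dd, par, De_De i i' f]
  · simp [Dd, par, De_Do i i' f]
  · simp [Dd, par, (De_Do i' i f).symm]
  · simp only [Dd, par, ite_true, if_true]
    rw [Do_Do i i' f]
    rw [show sgn F ((1 : ZMod 2) * 1) = -1 by rw [one_mul, sgn_one], neg_smul, one_smul]

lemma sMul_left_comm {pf pg : ZMod 2} {f g : SAlg F n n'} (hf : IsHomog pf f)
    (hg : IsHomog pg g) (z : SAlg F n n') :
    sMul f (sMul g z) = sgn F (pf * pg) • sMul g (sMul f z) := by
  rw [← sMul_assoc, ← sMul_assoc, sMul_comm hf hg, smul_sMul]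

lemma sum_conj {M : Type*} [AddCommMonoid M] (f : Bool × Fin n → M) :
    ∑ k, f (conj' k) = ∑ k, f k :=
  Fintype.sum_equiv ⟨conj', conj', conj_conj, conj_conj⟩ _ _ (fun _ => rfl)

lemma TH_eq (pa : ZMod 2) (a b : SAlg F n n) :
    TH pa a b = ∑ k : Bool × Fin n, sgn F (par k * pa) • sMul (Dd k a) (Dd (conj' k) b) := by
  rw [Fintype.sum_prod_type, Fintype.sum_bool]
  unfold TH
  simp only [Dd, par, conj', Bool.not_true, Bool.not_false, ite_true, ite_false,
    Bool.false_eq_true, one_mul, zero_mul, sgn_zero, one_smul]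
  rw [← Finset.smul_sum, add_comm]
/-! ### Expansion lemmas and the main theorem -/

lemma zmod2_add_self (z : ZMod 2) : z + z = 0 := by
  rcases zmod2_cases z with h | h <;> subst h <;> decide

lemma sgn_add_one (x : ZMod 2) : sgn F (x + 1) = - sgn F x := by
  rw [sgn_add, sgn_one]; ring

lemma TH_TH_expand {pf pg : ZMod 2} {f g : SAlg F n n} (hf : IsHomog pf f)
    (hg : IsHomog pg g) (x : SAlg F n n) :
    TH pf f (TH pg g x)
      = (∑ k : Bool × Fin n, ∑ l : Bool × Fin n,
          (sgn F (par k * pf) * sgn F (par l * pg)) •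
            sMul (Dd k f) (sMul (Dd (conj' k) (Dd l g)) (Dd (conj' l) x)))
        + ∑ k : Bool × Fin n, ∑ l : Bool × Fin n,
          (sgn F (par k * pf) * sgn F (par l * pg) * sgn F ((par k + 1) * (pg + par l))) •
            sMul (Dd k f) (sMul (Dd l g) (Dd (conj' k) (Dd (conj' l) x))) := by
  rw [TH_eq pg g x, TH_eq pf f _, ← Finset.sum_add_distrib]
  refine Finset.sum_congr rfl fun k _ => ?_
  have step : ∀ l, Dd (conj' k) (sgn F (par l * pg) • sMul (Dd l g) (Dd (conj' l) x))
      = sgn F (par l * pg) • (sMul (Dd (conj' k) (Dd l g)) (Dd (conj' l) x)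
          + sgn F ((par k + 1) * (pg + par l)) •
              sMul (Dd l g) (Dd (conj' k) (Dd (conj' l) x))) := by
    intro l
    rw [Dd_smul, Dd_sMul (conj' k) (Dd_homog l hg) _, par_conj]
  rw [Dd_sum, Finset.sum_congr rfl fun l _ => step l, sMul_sum, Finset.smul_sum,
    ← Finset.sum_add_distrib]
  refine Finset.sum_congr rfl fun l _ => ?_
  rw [sMul_smul, sMul_add, sMul_smul]
  simp only [smul_add, smul_smul, mul_assoc]

lemma TH_c_expand {pf pg : ZMod 2} {f g : SAlg F n n} (hf : IsHomog pf f) (x : SAlg F n n) :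
    TH (pf + pg + 1) (TH pf f g) x
      = (∑ k : Bool × Fin n, ∑ l : Bool × Fin n,
          (sgn F (par k * (pf + pg + 1)) * sgn F (par l * pf)) •
            sMul (sMul (Dd k (Dd l f)) (Dd (conj' l) g)) (Dd (conj' k) x))
        + ∑ k : Bool × Fin n, ∑ l : Bool × Fin n,
          (sgn F (par k * (pf + pg + 1)) * sgn F (par l * pf)
              * sgn F (par k * (pf + par l))) •
            sMul (sMul (Dd l f) (Dd k (Dd (conj' l) g))) (Dd (conj' k) x) := by
  rw [TH_eq pf f g, TH_eq (pf + pg + 1) _ x, ← Finset.sum_add_distrib]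
  refine Finset.sum_congr rfl fun k _ => ?_
  have step : ∀ l, Dd k (sgn F (par l * pf) • sMul (Dd l f) (Dd (conj' l) g))
      = sgn F (par l * pf) • (sMul (Dd k (Dd l f)) (Dd (conj' l) g)
          + sgn F (par k * (pf + par l)) • sMul (Dd l f) (Dd k (Dd (conj' l) g))) := by
    intro l
    rw [Dd_smul, Dd_sMul k (Dd_homog l hf) _]
  rw [Dd_sum, Finset.sum_congr rfl fun l _ => step l, sum_sMul, Finset.smul_sum,
    ← Finset.sum_add_distrib]
  refine Finset.sum_congr rfl fun l _ => ?_
  rw [smul_sMul, add_sMul, smul_sMul]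
  simp only [smul_add, smul_smul, mul_assoc]
lemma core1 (pa pb : ZMod 2) {a b : SAlg F n n} (ha : IsHomog pa a) (hb : IsHomog pb b)
    (x : SAlg F n n) (k l : Bool × Fin n) :
    (sgn F (par k * pa) * sgn F (par l * pb) * sgn F ((par k + 1) * (pb + par l))) •
        sMul (Dd k a) (sMul (Dd l b) (Dd (conj' k) (Dd (conj' l) x)))
      = sgn F ((pa + 1) * (pb + 1)) •
        ((sgn F (par l * pb) * sgn F (par k * pa) * sgn F ((par l + 1) * (pa + par k))) •
          sMul (Dd l b) (sMul (Dd k a) (Dd (conj' l) (Dd (conj' k) x)))) := by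
  rw [Dd_Dd (conj' l) (conj' k) x, par_conj, par_conj]
  rw [sMul_smul, sMul_smul]
  rw [sMul_left_comm (Dd_homog l hb) (Dd_homog k ha)]
  simp only [smul_smul]
  congr 1
  simp only [← sgn_add]
  apply congrArg
  generalize par k = u
  generalize par l = v
  rcases zmod2_cases pa with rfl | rfl <;> rcases zmod2_cases pb with rfl | rfl <;>
    rcases zmod2_cases u with rfl | rfl <;> rcases zmod2_cases v with rfl | rfl <;> decide

lemma core2 (pa pb : ZMod 2) {a b : SAlg F n n} (x : SAlg F n n) (k l : Bool × Fin n) :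
    (sgn F (par k * pa) * sgn F (par l * pb)) •
        sMul (Dd k a) (sMul (Dd (conj' k) (Dd l b)) (Dd (conj' l) x))
      = (sgn F (par l * (pa + pb + 1)) * sgn F (par k * pa)
            * sgn F (par l * (pa + par k))) •
          sMul (sMul (Dd k a) (Dd l (Dd (conj' k) b))) (Dd (conj' l) x) := by
  rw [Dd_Dd l (conj' k) b, par_conj]
  rw [sMul_smul, smul_sMul, sMul_assoc]
  simp only [smul_smul]
  congr 1
  simp only [← sgn_add]
  apply congrArg
  generalize par k = u
  generalize par l = v
  rcases zmod2_cases pa with rfl | rfl <;> rcases zmod2_cases pb with rfl | rfl <;>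
    rcases zmod2_cases u with rfl | rfl <;> rcases zmod2_cases v with rfl | rfl <;> decide

lemma core3 (pa pb : ZMod 2) {a b : SAlg F n n} (ha : IsHomog pa a) (hb : IsHomog pb b)
    (x : SAlg F n n) (k l : Bool × Fin n) :
    (sgn F (par l * (pa + pb + 1)) * sgn F (par (conj' k) * pa)) •
        sMul (sMul (Dd l (Dd (conj' k) a)) (Dd k b)) (Dd (conj' l) x)
      = sgn F ((pa + 1) * (pb + 1) + 1) •
        ((sgn F (par k * pb) * sgn F (par l * pa)) •
          sMul (Dd k b) (sMul (Dd (conj' k) (Dd l a)) (Dd (conj' l) x))) := by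
  rw [Dd_Dd l (conj' k) a, par_conj]
  rw [smul_sMul, smul_sMul, sMul_assoc]
  rw [sMul_left_comm (Dd_homog k hb) (Dd_homog (conj' k) (Dd_homog l ha))]
  simp only [smul_smul, par_conj]
  congr 1
  simp only [← sgn_add]
  apply congrArg
  generalize par k = u
  generalize par l = v
  rcases zmod2_cases pa with rfl | rfl <;> rcases zmod2_cases pb with rfl | rfl <;>
    rcases zmod2_cases u with rfl | rfl <;> rcases zmod2_cases v with rfl | rfl <;> decide

/-- For all homogeneous `a, b ∈ 𝒪(n, n; t̲)`:
`[T_H(a), T_H(b)] = T_H(T_H(a)(b))`, where the bracket is the supercommutator of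
superderivations (`T_H(a)` has parity `p(a) + 1`). -/
theorem stmt8 (p : ℕ) (hp : p.Prime) (hp3 : 3 < p) [CharP F p]
    (t : Fin n → ℕ) (ht : ∀ i, 0 < t i)
    (pa pb : ZMod 2) (a b : SAlg F n n)
    (ha : IsHomog pa a) (hb : IsHomog pb b)
    (hba : Bounded p t a) (hbb : Bounded p t b) :
    ∀ x : SAlg F n n,
      TH pa a (TH pb b x) - sgn F ((pa + 1) * (pb + 1)) • TH pb b (TH pa a x)
        = TH (pa + pb + 1) (TH pa a b) x := by
  intro x
  have E1 : (∑ k : Bool × Fin n, ∑ l : Bool × Fin n,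
        (sgn F (par k * pa) * sgn F (par l * pb) * sgn F ((par k + 1) * (pb + par l))) •
          sMul (Dd k a) (sMul (Dd l b) (Dd (conj' k) (Dd (conj' l) x))))
      = sgn F ((pa + 1) * (pb + 1)) •
        ∑ k : Bool × Fin n, ∑ l : Bool × Fin n,
          (sgn F (par k * pb) * sgn F (par l * pa) * sgn F ((par k + 1) * (pa + par l))) •
            sMul (Dd k b) (sMul (Dd l a) (Dd (conj' k) (Dd (conj' l) x))) := by
    calc (∑ k : Bool × Fin n, ∑ l : Bool × Fin n,
        (sgn F (par k * pa) * sgn F (par l * pb) * sgn F ((par k + 1) * (pb + par l))) •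
          sMul (Dd k a) (sMul (Dd l b) (Dd (conj' k) (Dd (conj' l) x))))
        = ∑ k : Bool × Fin n, ∑ l : Bool × Fin n, sgn F ((pa + 1) * (pb + 1)) •
            ((sgn F (par l * pb) * sgn F (par k * pa) * sgn F ((par l + 1) * (pa + par k))) •
              sMul (Dd l b) (sMul (Dd k a) (Dd (conj' l) (Dd (conj' k) x)))) :=
          Finset.sum_congr rfl fun k _ => Finset.sum_congr rfl fun l _ =>
            core1 pa pb ha hb x k l
      _ = sgn F ((pa + 1) * (pb + 1)) •
            ∑ k : Bool × Fin n, ∑ l : Bool × Fin n,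
              ((sgn F (par l * pb) * sgn F (par k * pa) * sgn F ((par l + 1) * (pa + par k))) •
                sMul (Dd l b) (sMul (Dd k a) (Dd (conj' l) (Dd (conj' k) x)))) := by
          rw [Finset.smul_sum]
          exact Finset.sum_congr rfl fun k _ => (Finset.smul_sum).symm
      _ = _ := by rw [Finset.sum_comm]
  have E2 : (∑ k : Bool × Fin n, ∑ l : Bool × Fin n,
        (sgn F (par k * pa) * sgn F (par l * pb)) •
          sMul (Dd k a) (sMul (Dd (conj' k) (Dd l b)) (Dd (conj' l) x)))
      = ∑ k : Bool × Fin n, ∑ l : Bool × Fin n,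
          (sgn F (par k * (pa + pb + 1)) * sgn F (par l * pa)
              * sgn F (par k * (pa + par l))) •
            sMul (sMul (Dd l a) (Dd k (Dd (conj' l) b))) (Dd (conj' k) x) := by
    calc (∑ k : Bool × Fin n, ∑ l : Bool × Fin n,
        (sgn F (par k * pa) * sgn F (par l * pb)) •
          sMul (Dd k a) (sMul (Dd (conj' k) (Dd l b)) (Dd (conj' l) x)))
        = ∑ k : Bool × Fin n, ∑ l : Bool × Fin n,
            (sgn F (par l * (pa + pb + 1)) * sgn F (par k * pa)
                * sgn F (par l * (pa + par k))) •
              sMul (sMul (Dd k a) (Dd l (Dd (conj' k) b))) (Dd (conj' l) x) :=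
          Finset.sum_congr rfl fun k _ => Finset.sum_congr rfl fun l _ =>
            core2 pa pb x k l
      _ = _ := by rw [Finset.sum_comm]
  have E3 : (∑ k : Bool × Fin n, ∑ l : Bool × Fin n,
        (sgn F (par k * (pa + pb + 1)) * sgn F (par l * pa)) •
          sMul (sMul (Dd k (Dd l a)) (Dd (conj' l) b)) (Dd (conj' k) x))
      = sgn F ((pa + 1) * (pb + 1) + 1) •
        ∑ k : Bool × Fin n, ∑ l : Bool × Fin n,
          (sgn F (par k * pb) * sgn F (par l * pa)) •
            sMul (Dd k b) (sMul (Dd (conj' k) (Dd l a)) (Dd (conj' l) x)) := by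
    calc (∑ k : Bool × Fin n, ∑ l : Bool × Fin n,
        (sgn F (par k * (pa + pb + 1)) * sgn F (par l * pa)) •
          sMul (sMul (Dd k (Dd l a)) (Dd (conj' l) b)) (Dd (conj' k) x))
        = ∑ k : Bool × Fin n, ∑ l : Bool × Fin n,
            (sgn F (par l * (pa + pb + 1)) * sgn F (par k * pa)) •
              sMul (sMul (Dd l (Dd k a)) (Dd (conj' k) b)) (Dd (conj' l) x) := by
          rw [Finset.sum_comm]
      _ = ∑ k : Bool × Fin n, ∑ l : Bool × Fin n,
            (sgn F (par l * (pa + pb + 1)) * sgn F (par (conj' k) * pa)) •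
              sMul (sMul (Dd l (Dd (conj' k) a)) (Dd (conj' (conj' k)) b)) (Dd (conj' l) x) :=
          (sum_conj _).symm
      _ = ∑ k : Bool × Fin n, ∑ l : Bool × Fin n,
            (sgn F (par l * (pa + pb + 1)) * sgn F (par (conj' k) * pa)) •
              sMul (sMul (Dd l (Dd (conj' k) a)) (Dd k b)) (Dd (conj' l) x) := by
          simp only [conj_conj]
      _ = ∑ k : Bool × Fin n, ∑ l : Bool × Fin n, sgn F ((pa + 1) * (pb + 1) + 1) •
            ((sgn F (par k * pb) * sgn F (par l * pa)) •
              sMul (Dd k b) (sMul (Dd (conj' k) (Dd l a)) (Dd (conj' l) x))) :=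
          Finset.sum_congr rfl fun k _ => Finset.sum_congr rfl fun l _ =>
            core3 pa pb ha hb x k l
      _ = _ := by
          rw [Finset.smul_sum]
          exact Finset.sum_congr rfl fun k _ => (Finset.smul_sum).symm
  rw [TH_TH_expand ha hb x, TH_TH_expand hb ha x, TH_c_expand ha x, E1, E2, E3,
    sgn_add_one, smul_add, neg_smul]
  abel

end
end

section
/- If a finite-dimensional simple Lie superalgebra L over 𝔽 does not possess any nondegenerate associative form, then every homogeneous superderivation ψ : L → L* is skew, i.e. ψ(x)(y) = −(−1)^{p(x)p(y)} ψ(y)(x) for all homogeneous x, y ∈ L, and H²(L, 𝔽) ≅ H¹(L, L*). -/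
section
variable (F : Type*) [Field F] (L : Type*) [AddCommGroup L] [Module F L]
  (g : ZMod 2 → Submodule F L) (br : L →ₗ[F] L →ₗ[F] L)

/-- `ψ : L → L*` is a homogeneous superderivation of parity `pψ` into the
coadjoint module `L*` (note `L* = L →ₗ[F] F`, so `ψ` is also a bilinear form). -/
def IsSuperDer (pψ : ZMod 2) (ψ : L →ₗ[F] Module.Dual F L) : Prop :=
  (∀ a : ZMod 2, ∀ x ∈ g a, ∀ y ∈ g (a + pψ + 1), ψ x y = 0) ∧
  (∀ a b : ZMod 2, ∀ x ∈ g a, ∀ y ∈ g b, ∀ z : L,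
    ψ (br x y) z
      = sgn F (pψ * a) * (- sgn F (a * (b + pψ)) * ψ y (br x z))
      - sgn F ((pψ + a) * b) * (- sgn F (b * (a + pψ)) * ψ x (br y z)))

/-- `c` is super-skew: `c(x, y) = -(-1)^{p(x)p(y)} c(y, x)`. -/
def IsSkew (c : L →ₗ[F] L →ₗ[F] F) : Prop :=
  ∀ a b : ZMod 2, ∀ x ∈ g a, ∀ y ∈ g b, c x y = - sgn F (a * b) * c y x

/-- `c` is a scalar 2-cocycle (trivial coefficients):
`(-1)^{p(x)p(z)} c([x,y], z) + (-1)^{p(y)p(x)} c([y,z], x)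
  + (-1)^{p(z)p(y)} c([z,x], y) = 0`. -/
def IsCocycle (c : L →ₗ[F] L →ₗ[F] F) : Prop :=
  ∀ a b k : ZMod 2, ∀ x ∈ g a, ∀ y ∈ g b, ∀ z ∈ g k,
    sgn F (a * k) * c (br x y) z + sgn F (b * a) * c (br y z) x
      + sgn F (k * b) * c (br z x) y = 0

/-- `ψ` is inner; for `c` regarded as a 2-cochain this says `c` is a
2-coboundary `c(x, y) = f([x, y])`. -/
def IsInner (ψ : L →ₗ[F] Module.Dual F L) : Prop :=
  ∃ f : Module.Dual F L, ∀ x y : L, ψ x y = f (br x y)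

end

section Aux
variable (F : Type*) [Field F] (L : Type*) [AddCommGroup L] [Module F L]
  (g : ZMod 2 → Submodule F L)

/-- Projection onto the `c`-component of the internal direct sum decomposition. -/
noncomputable def pr (hg : DirectSum.IsInternal g) (c : ZMod 2) : L →ₗ[F] L :=
  (g c).subtype ∘ₗ (DirectSum.component F (ZMod 2) (fun i => g i) c) ∘ₗ
    (LinearEquiv.ofBijective (DirectSum.coeLinearMap g) hg).symm.toLinearMap

theorem pr_mem (hg : DirectSum.IsInternal g) (c : ZMod 2) (x : L) :
    pr F L g hg c x ∈ g c :=
  (DirectSum.component F (ZMod 2) (fun i => g i) c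
    ((LinearEquiv.ofBijective (DirectSum.coeLinearMap g) hg).symm x)).2

theorem pr_same (hg : DirectSum.IsInternal g) {c : ZMod 2} {x : L} (hx : x ∈ g c) :
    pr F L g hg c x = x := by
  simp only [pr, LinearMap.coe_comp, Function.comp_apply, LinearEquiv.coe_coe]
  rw [show DirectSum.component F (ZMod 2) (fun i => g i) c
        ((LinearEquiv.ofBijective (DirectSum.coeLinearMap g) hg).symm x)
      = (LinearEquiv.ofBijective (DirectSum.coeLinearMap g) hg).symm x c from rfl,
    hg.ofBijective_coeLinearMap_of_mem hx]
  rfl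

theorem pr_ne (hg : DirectSum.IsInternal g) {a c : ZMod 2} (h : a ≠ c) {x : L}
    (hx : x ∈ g a) : pr F L g hg c x = 0 := by
  simp only [pr, LinearMap.coe_comp, Function.comp_apply, LinearEquiv.coe_coe]
  rw [show DirectSum.component F (ZMod 2) (fun i => g i) c
        ((LinearEquiv.ofBijective (DirectSum.coeLinearMap g) hg).symm x)
      = (LinearEquiv.ofBijective (DirectSum.coeLinearMap g) hg).symm x c from rfl,
    hg.ofBijective_coeLinearMap_of_mem_ne h hx]
  rfl

theorem pr_apply_of_mem (hg : DirectSum.IsInternal g) (c c' : ZMod 2) {x : L}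
    (hx : x ∈ g c) : pr F L g hg c' x = if c' = c then x else 0 := by
  by_cases h : c' = c
  · subst h; rw [if_pos rfl]; exact pr_same F L g hg hx
  · rw [if_neg h]; exact pr_ne F L g hg (Ne.symm h) hx

theorem homog_ind (htop : ⨆ i, g i = ⊤) (p : L → Prop) (h0 : p 0)
    (hadd : ∀ u v, p u → p v → p (u + v)) (hh : ∀ i, ∀ x ∈ g i, p x) : ∀ x, p x := by
  intro x
  have hx : x ∈ ⨆ i, g i := by rw [htop]; trivial
  exact Submodule.iSup_induction (motive := p) g hx hh h0 hadd

theorem pr_sum (hg : DirectSum.IsInternal g) (x : L) :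
    pr F L g hg 0 x + pr F L g hg 1 x = x := by
  refine homog_ind F L g hg.submodule_iSup_eq_top
    (fun x => pr F L g hg 0 x + pr F L g hg 1 x = x) (by simp)
    (fun u v hu hv => by
      rw [map_add, map_add, add_add_add_comm, hu, hv]) ?_ x
  intro i x hx
  rcases (by decide : ∀ i : ZMod 2, i = 0 ∨ i = 1) i with rfl | rfl
  · rw [pr_same F L g hg hx, pr_ne F L g hg (by decide) hx, add_zero]
  · rw [pr_same F L g hg hx, pr_ne F L g hg (by decide) hx, zero_add]

/-- The super-symmetrization of the bilinear form `ψ`. -/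
noncomputable def Bform (hg : DirectSum.IsInternal g)
    (ψ : L →ₗ[F] Module.Dual F L) : L →ₗ[F] L →ₗ[F] F :=
  LinearMap.mk₂ F (fun x y => ψ x y
    + (ψ (pr F L g hg 0 y) (pr F L g hg 0 x) + ψ (pr F L g hg 0 y) (pr F L g hg 1 x)
       + ψ (pr F L g hg 1 y) (pr F L g hg 0 x) - ψ (pr F L g hg 1 y) (pr F L g hg 1 x)))
    (fun x x' y => by simp [map_add]; ring)
    (fun t x y => by simp [map_smul]; ring)
    (fun x y y' => by simp [map_add]; ring)
    (fun t x y => by simp [map_smul]; ring)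

theorem Bform_hom (hg : DirectSum.IsInternal g) (ψ : L →ₗ[F] Module.Dual F L)
    (a b : ZMod 2) {x y : L} (hx : x ∈ g a) (hy : y ∈ g b) :
    Bform F L g hg ψ x y = ψ x y + sgn F (a * b) * ψ y x := by
  simp only [Bform, LinearMap.mk₂_apply]
  rw [pr_apply_of_mem F L g hg a 0 hx, pr_apply_of_mem F L g hg a 1 hx,
    pr_apply_of_mem F L g hg b 0 hy, pr_apply_of_mem F L g hg b 1 hy]
  rcases (by decide : ∀ i : ZMod 2, i = 0 ∨ i = 1) a with rfl | rfl <;>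
    rcases (by decide : ∀ i : ZMod 2, i = 0 ∨ i = 1) b with rfl | rfl <;>
      simp +decide [sgn] <;> ring

end Aux
set_option linter.unreachableTactic false
set_option linter.unusedTactic false

set_option maxHeartbeats 4000000 in
/-- If a finite-dimensional simple Lie superalgebra `L` possesses no
nondegenerate associative form, then every homogeneous superderivation
`ψ : L → L*` is skew; moreover the identification of a superderivation
`ψ : L → L* = L →ₗ (L →ₗ 𝔽)` with the bilinear form `(x, y) ↦ ψ(x)(y)` carries
skew superderivations exactly onto scalar 2-cocycles (and, tautologically,
inner superderivations onto 2-coboundaries), whence `H²(L, 𝔽) ≅ H¹(L, L*)`. -/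
theorem stmt19 (F : Type*) [Field F]
    (L : Type*) [AddCommGroup L] [Module F L] [Module.Finite F L]
    (g : ZMod 2 → Submodule F L) (br : L →ₗ[F] L →ₗ[F] L)
    (hg : DirectSum.IsInternal g)
    (hbrg : ∀ a b : ZMod 2, ∀ x ∈ g a, ∀ y ∈ g b, br x y ∈ g (a + b))
    (hskew : ∀ a b : ZMod 2, ∀ x ∈ g a, ∀ y ∈ g b,
      br x y = - sgn F (a * b) • br y x)
    (hjac : ∀ a b : ZMod 2, ∀ x ∈ g a, ∀ y ∈ g b, ∀ z : L,
      br x (br y z) = br (br x y) z + sgn F (a * b) • br y (br x z))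
    (hsimple : ∀ I : Submodule F L, (∀ x y : L, y ∈ I → br x y ∈ I) → I = ⊥ ∨ I = ⊤)
    (hnonab : br ≠ 0)
    (hnoform : ¬ ∃ B : L →ₗ[F] L →ₗ[F] F,
      (∀ x : L, (∀ y : L, B x y = 0) → x = 0) ∧
      (∀ y : L, (∀ x : L, B x y = 0) → y = 0) ∧
      (∀ x y z : L, B (br x y) z = B x (br y z))) :
    (∀ (pψ : ZMod 2) (ψ : L →ₗ[F] Module.Dual F L),
      IsSuperDer F L g br pψ ψ → IsSkew F L g ψ) ∧
    (∀ (pψ : ZMod 2) (ψ : L →ₗ[F] Module.Dual F L),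
      IsSuperDer F L g br pψ ψ → IsSkew F L g ψ → IsCocycle F L g br ψ) ∧
    (∀ (pψ : ZMod 2) (c : L →ₗ[F] Module.Dual F L),
      (∀ a : ZMod 2, ∀ x ∈ g a, ∀ y ∈ g (a + pψ + 1), c x y = 0) →
      IsSkew F L g c → IsCocycle F L g br c →
      IsSuperDer F L g br pψ c) := by
  have hzc : ∀ i : ZMod 2, i = 0 ∨ i = 1 := by decide
  -- clean Leibniz rule from the superderivation identity
  have star : ∀ (pψ : ZMod 2) (ψ : L →ₗ[F] Module.Dual F L), IsSuperDer F L g br pψ ψ →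
      ∀ a b : ZMod 2, ∀ x ∈ g a, ∀ y ∈ g b, ∀ z : L,
        ψ (br x y) z = - sgn F (a * b) * ψ y (br x z) + ψ x (br y z) := by
    intro pψ ψ hder a b x hx y hy z
    rw [hder.2 a b x hx y hy z]
    rcases hzc a with rfl | rfl <;> rcases hzc b with rfl | rfl <;>
      rcases hzc pψ with rfl | rfl <;> simp +decide [sgn] <;> ring
  refine ⟨?_, ?_, ?_⟩
  · -- every homogeneous superderivation is skew
    intro pψ ψ hder
    set B := Bform F L g hg ψ with hBdef
    have hBhom : ∀ a b : ZMod 2, ∀ x ∈ g a, ∀ y ∈ g b,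
        B x y = ψ x y + sgn F (a * b) * ψ y x := fun a b x hx y hy =>
      Bform_hom F L g hg ψ a b hx hy
    have hBzero : ∀ a b : ZMod 2, b ≠ a + pψ → ∀ x ∈ g a, ∀ y ∈ g b, B x y = 0 := by
      intro a b hab x hx y hy
      have hb : b = a + pψ + 1 :=
        (by decide : ∀ a b pψ : ZMod 2, b ≠ a + pψ → b = a + pψ + 1) a b pψ hab
      subst hb
      have hx' : x ∈ g (a + pψ + 1 + pψ + 1) := by
        rw [(by decide : ∀ a pψ : ZMod 2, a + pψ + 1 + pψ + 1 = a) a pψ]; exact hx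
      rw [hBhom a _ x hx y hy, hder.1 a x hx y hy, hder.1 (a + pψ + 1) y hy x hx']
      ring
    have hassoc0 : ∀ a b k : ZMod 2, ∀ x ∈ g a, ∀ y ∈ g b, ∀ z ∈ g k,
        B (br x y) z = B x (br y z) := by
      intro a b k x hx y hy z hz
      rw [hBhom (a + b) k (br x y) (hbrg a b x hx y hy) z hz,
        hBhom a (b + k) x hx (br y z) (hbrg b k y hy z hz)]
      have h1 := star pψ ψ hder a b x hx y hy z
      have e2 : ψ y (br x z) = - sgn F (a * k) * ψ y (br z x) := by
        rw [hskew a k x hx z hz, map_smul, smul_eq_mul]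
      have h3 := star pψ ψ hder b k y hy z hz x
      have e4 : ψ z (br y x) = - sgn F (b * a) * ψ z (br x y) := by
        rw [hskew b a y hy x hx, map_smul, smul_eq_mul]
      rw [h1, e2, h3, e4]
      rcases hzc a with rfl | rfl <;> rcases hzc b with rfl | rfl <;>
        rcases hzc k with rfl | rfl <;> simp +decide [sgn] <;> ring
    have hassoc : ∀ x y z : L, B (br x y) z = B x (br y z) := by
      have step1 : ∀ a b : ZMod 2, ∀ x ∈ g a, ∀ y ∈ g b, ∀ z : L,
          B (br x y) z = B x (br y z) := by
        intro a b x hx y hy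
        refine homog_ind F L g hg.submodule_iSup_eq_top
          (fun z => B (br x y) z = B x (br y z)) (by simp)
          (fun u v hu hv => by
            simp only [map_add]
            rw [hu, hv]) ?_
        intro k z hz
        exact hassoc0 a b k x hx y hy z hz
      have step2 : ∀ a : ZMod 2, ∀ x ∈ g a, ∀ y z : L,
          B (br x y) z = B x (br y z) := by
        intro a x hx
        refine homog_ind F L g hg.submodule_iSup_eq_top
          (fun y => ∀ z, B (br x y) z = B x (br y z)) (by simp)
          (fun u v hu hv z => by
            simp only [map_add, LinearMap.add_apply]
            rw [hu z, hv z]) ?_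
        intro b y hy z
        exact step1 a b x hx y hy z
      intro x y z
      refine homog_ind F L g hg.submodule_iSup_eq_top
        (fun x => ∀ y z, B (br x y) z = B x (br y z)) (by simp)
        (fun u v hu hv y z => by
          simp only [map_add, LinearMap.add_apply]
          rw [hu y z, hv y z]) (fun a x hx y z => step2 a x hx y z) x y z
    set R : Submodule F L := LinearMap.ker B with hRdef
    have hmemR : ∀ x : L, x ∈ R ↔ ∀ z : L, B x z = 0 := by
      intro x
      rw [hRdef, LinearMap.mem_ker]
      exact ⟨fun h z => by rw [h]; simp, fun h => LinearMap.ext h⟩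
    have hRgr : ∀ y ∈ R, ∀ c : ZMod 2, pr F L g hg c y ∈ R := by
      intro y hy c
      rw [hmemR]
      refine homog_ind F L g hg.submodule_iSup_eq_top
        (fun z => B (pr F L g hg c y) z = 0) (by simp)
        (fun u v hu hv => by
          simp only [map_add]
          rw [hu, hv, add_zero]) ?_
      intro d z hz
      by_cases hdc : d = c + pψ
      · have h1 : B y z = 0 := (hmemR y).mp hy z
        rw [← pr_sum F L g hg y, map_add, LinearMap.add_apply] at h1
        rcases hzc c with rfl | rfl
        · have h2 : B (pr F L g hg 1 y) z = 0 :=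
            hBzero 1 d
              ((by decide : ∀ d pψ : ZMod 2, d = 0 + pψ → d ≠ 1 + pψ) d pψ hdc)
              (pr F L g hg 1 y) (pr_mem F L g hg 1 y) z hz
          rw [h2, add_zero] at h1
          exact h1
        · have h2 : B (pr F L g hg 0 y) z = 0 :=
            hBzero 0 d
              ((by decide : ∀ d pψ : ZMod 2, d = 1 + pψ → d ≠ 0 + pψ) d pψ hdc)
              (pr F L g hg 0 y) (pr_mem F L g hg 0 y) z hz
          rw [h2, zero_add] at h1
          exact h1
      · exact hBzero c d hdc (pr F L g hg c y) (pr_mem F L g hg c y) z hz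
    have hRideal : ∀ x y : L, y ∈ R → br x y ∈ R := by
      intro x y hy
      refine homog_ind F L g hg.submodule_iSup_eq_top
        (fun x => br x y ∈ R) (by simp) (fun u v hu hv => by
          simp only [map_add, LinearMap.add_apply]
          exact add_mem hu hv) ?_ x
      intro a x hx
      have key : ∀ c : ZMod 2, br x (pr F L g hg c y) ∈ R := by
        intro c
        rw [hmemR]
        intro z
        rw [hskew a c x hx (pr F L g hg c y) (pr_mem F L g hg c y), map_smul,
          LinearMap.smul_apply, hassoc (pr F L g hg c y) x z,
          (hmemR _).mp (hRgr y hy c) (br x z), smul_zero]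
      rw [← pr_sum F L g hg y, map_add]
      exact add_mem (key 0) (key 1)
    have hBsymm : ∀ a b : ZMod 2, ∀ x ∈ g a, ∀ y ∈ g b,
        B x y = sgn F (a * b) * B y x := by
      intro a b x hx y hy
      rw [hBhom a b x hx y hy, hBhom b a y hy x hx]
      rcases hzc a with rfl | rfl <;> rcases hzc b with rfl | rfl <;>
        simp +decide [sgn] <;> ring
    rcases hsimple R hRideal with hbot | htop
    · exfalso
      apply hnoform
      refine ⟨B, ?_, ?_, fun x y z => hassoc x y z⟩
      · intro x hx
        have hxR : x ∈ R := (hmemR x).mpr hx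
        rw [hbot] at hxR
        simpa using hxR
      · intro y hyB
        have hyR : y ∈ R := by
          rw [hmemR]
          refine homog_ind F L g hg.submodule_iSup_eq_top
            (fun z => B y z = 0) (by simp) (fun u v hu hv => by
              simp only [map_add]
              rw [hu, hv, add_zero]) ?_
          intro d z hz
          have key : ∀ c : ZMod 2, B (pr F L g hg c y) z = 0 := by
            intro c
            rw [hBsymm c d (pr F L g hg c y) (pr_mem F L g hg c y) z hz]
            by_cases hdc : c = d + pψ
            · have h1 : B z y = 0 := hyB z
              rw [← pr_sum F L g hg y, map_add] at h1
              rcases hzc c with rfl | rfl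
              · have h2 : B z (pr F L g hg 1 y) = 0 :=
                  hBzero d 1
                    ((by decide : ∀ d pψ : ZMod 2, (0 : ZMod 2) = d + pψ → (1 : ZMod 2) ≠ d + pψ) d pψ hdc)
                    z hz (pr F L g hg 1 y) (pr_mem F L g hg 1 y)
                rw [h2, add_zero] at h1
                rw [h1, mul_zero]
              · have h2 : B z (pr F L g hg 0 y) = 0 :=
                  hBzero d 0
                    ((by decide : ∀ d pψ : ZMod 2, (1 : ZMod 2) = d + pψ → (0 : ZMod 2) ≠ d + pψ) d pψ hdc)
                    z hz (pr F L g hg 0 y) (pr_mem F L g hg 0 y)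
                rw [h2, zero_add] at h1
                rw [h1, mul_zero]
            · rw [hBzero d c hdc z hz (pr F L g hg c y) (pr_mem F L g hg c y), mul_zero]
          rw [← pr_sum F L g hg y, map_add, LinearMap.add_apply, key 0, key 1, add_zero]
        rw [hbot] at hyR
        simpa using hyR
    · intro a b x hx y hy
      have hxR : x ∈ R := by rw [htop]; trivial
      have h0 : B x y = 0 := (hmemR x).mp hxR y
      rw [hBhom a b x hx y hy] at h0
      linear_combination h0
  · -- skew superderivations are 2-cocycles
    intro pψ ψ hder hsk a b k x hx y hy z hz
    have h1 := star pψ ψ hder a b x hx y hy z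
    have h2 := hsk a (b + k) x hx (br y z) (hbrg b k y hy z hz)
    have h3 := hsk b (a + k) y hy (br x z) (hbrg a k x hx z hz)
    have e3 : ψ (br x z) y = - sgn F (a * k) * ψ (br z x) y := by
      rw [hskew a k x hx z hz, map_smul, LinearMap.smul_apply, smul_eq_mul]
    rw [h1, h3, e3, h2]
    rcases hzc a with rfl | rfl <;> rcases hzc b with rfl | rfl <;>
      rcases hzc k with rfl | rfl <;> simp +decide [sgn] <;> ring
  · -- skew 2-cocycles are superderivations
    intro pψ c hpar hsk hcoc
    refine ⟨hpar, ?_⟩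
    intro a b x hx y hy z
    refine homog_ind F L g hg.submodule_iSup_eq_top
      (fun z => c (br x y) z
        = sgn F (pψ * a) * (- sgn F (a * (b + pψ)) * c y (br x z))
        - sgn F ((pψ + a) * b) * (- sgn F (b * (a + pψ)) * c x (br y z))) (by simp)
      (fun u v hu hv => by
        simp only [map_add]
        rw [hu, hv]; ring) ?_ z
    intro k z hz
    have h := hcoc a b k x hx y hy z hz
    have e1 := hsk (b + k) a (br y z) (hbrg b k y hy z hz) x hx
    have e2 := hsk (k + a) b (br z x) (hbrg k a z hz x hx) y hy
    have e3 : c y (br z x) = - sgn F (k * a) * c y (br x z) := by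
      rw [hskew k a z hz x hx, map_smul, smul_eq_mul]
    rw [e1, e2, e3] at h
    rcases hzc a with rfl | rfl <;> rcases hzc b with rfl | rfl <;>
      rcases hzc k with rfl | rfl <;> rcases hzc pψ with rfl | rfl <;>
        simp +decide [sgn] at h ⊢ <;>
          first
          | linear_combination h
          | linear_combination -h
end
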